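/- arXiv:1202.3826 — 12 statements merged into one kernel-verified Lean document; each statement's English description precedes it below -/
import Mathlib

section
/- Let F = G·H⁻¹ ∈ ℂ[[x₁,x₂]] where G = x₂(2x₂ − 1) and H = x₁ + x₂ − 1 (note H(0,0) = −1 ≠ 0). Then the diagonal coefficient F_{(0,0)} = 0, and for every n ≥ 1, the diagonal coefficient F_{(n,n)} equals the (n−1)-st Catalan number C_{n-1} = (1/n)·binom(2n−2, n−1). Equivalently, the Maclaurin coefficients of the algebraic function f(x₁) = (1 − √(1 − 4x₁))/2 satisfy f_n = F_{(n,n)} for all n ∈ ℕ. -/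
open MvPolynomial

noncomputable def Tser : MvPowerSeries (Fin 2) ℂ :=
  fun d => -((d 0 + d 1).choose (d 0) : ℂ)

lemma Tser_coeff (d : Fin 2 →₀ ℕ) :
    MvPowerSeries.coeff d Tser = -((d 0 + d 1).choose (d 0) : ℂ) := rfl

lemma coeffXmulT (d : Fin 2 →₀ ℕ) (i : Fin 2) (φ : MvPowerSeries (Fin 2) ℂ) :
    MvPowerSeries.coeff d (MvPowerSeries.X i * φ) =
      if 1 ≤ d i then MvPowerSeries.coeff (d - Finsupp.single i 1) φ else 0 := by
  rw [MvPowerSeries.X, MvPowerSeries.coeff_monomial_mul]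
  simp [Finsupp.single_le_iff]

lemma Hmul : (MvPowerSeries.X 0 + MvPowerSeries.X 1 - 1 : MvPowerSeries (Fin 2) ℂ) * Tser = 1 := by
  ext d
  rw [sub_mul, add_mul, one_mul, map_sub, map_add, coeffXmulT, coeffXmulT,
    MvPowerSeries.coeff_one, Tser_coeff]
  have h0 : ((d - Finsupp.single 0 1 : Fin 2 →₀ ℕ)) 0 = d 0 - 1 := by
    simp [Finsupp.tsub_apply, Finsupp.single_apply]
  have h0' : ((d - Finsupp.single 0 1 : Fin 2 →₀ ℕ)) 1 = d 1 := by
    simp [Finsupp.tsub_apply, Finsupp.single_apply]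
  have h1 : ((d - Finsupp.single 1 1 : Fin 2 →₀ ℕ)) 0 = d 0 := by
    simp [Finsupp.tsub_apply, Finsupp.single_apply]
  have h1' : ((d - Finsupp.single 1 1 : Fin 2 →₀ ℕ)) 1 = d 1 - 1 := by
    simp [Finsupp.tsub_apply, Finsupp.single_apply]
  rw [Tser_coeff, Tser_coeff, h0, h0', h1, h1']
  have hd : d = 0 ↔ d 0 = 0 ∧ d 1 = 0 := by
    constructor
    · intro h; simp [h]
    · intro ⟨ha, hb⟩; ext i; fin_cases i <;> simp [ha, hb]
  simp only [hd]
  clear h0 h0' h1 h1' hd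
  generalize d 0 = a
  generalize d 1 = b
  rcases a with _ | a <;> rcases b with _ | b
  · simp
  · simp
  · simp
  · rw [if_pos (by omega), if_pos (by omega), if_neg (by simp), Nat.succ_sub_one,
      Nat.succ_sub_one]
    have hpas : (a + 1 + (b + 1)).choose (a + 1)
        = (a + (b + 1)).choose a + (a + 1 + b).choose (a + 1) := by
      rw [show a + 1 + (b + 1) = (a + b + 1) + 1 by omega, Nat.choose_succ_succ,
        show a + (b + 1) = a + b + 1 by omega, show a + 1 + b = a + b + 1 by omega]
    rw [hpas]
    push_cast
    ring

lemma catalan_formula (m : ℕ) :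
    (((2 * m + 1).choose (m + 1) : ℂ)) - 2 * ((2 * m).choose (m + 1)) = catalan m := by
  have h1 : ((m : ℂ) + 1) ≠ 0 := by
    have : ((m + 1 : ℕ) : ℂ) ≠ 0 := Nat.cast_ne_zero.mpr (by omega)
    push_cast at this; exact this
  have hp : (((2 * m + 1).choose (m + 1) : ℂ)) =
      ((2 * m).choose m : ℂ) + ((2 * m).choose (m + 1) : ℂ) := by
    exact_mod_cast Nat.choose_succ_succ' (2 * m) m
  have hqn := Nat.choose_succ_right_eq (2 * m) m
  rw [show 2 * m - m = m by omega] at hqn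
  have hq : ((2 * m).choose (m + 1) : ℂ) * ((m : ℂ) + 1) = ((2 * m).choose m : ℂ) * m := by
    exact_mod_cast hqn
  have hrn := succ_mul_catalan_eq_centralBinom m
  have hr : ((m : ℂ) + 1) * (catalan m : ℂ) = ((2 * m).choose m : ℂ) := by
    have : (2 * m).choose m = m.centralBinom := rfl
    rw [this]; exact_mod_cast hrn
  apply mul_left_cancel₀ h1
  linear_combination ((m : ℂ) + 1) * hp - hq - hr

/-- The Maclaurin coefficients of `f(x₁) = (1 - √(1-4x₁))/2` (the right-shifted Catalan
generating function) are the diagonal coefficients of `F = x₂(2x₂-1)/(x₁+x₂-1)`: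
`F_{(0,0)} = 0` and `F_{(n,n)} = C_{n-1}` for `n ≥ 1`. -/
theorem catalan_shifted_diagonal
    (G H : MvPolynomial (Fin 2) ℂ)
    (hG : G = X 1 * (2 * X 1 - 1))
    (hH : H = X 0 + X 1 - 1)
    (F : MvPowerSeries (Fin 2) ℂ)
    (hF : F = (G : MvPowerSeries (Fin 2) ℂ) * (H : MvPowerSeries (Fin 2) ℂ)⁻¹) :
    MvPowerSeries.coeff (Finsupp.equivFunOnFinite.symm ![0, 0]) F = 0 ∧
    ∀ n : ℕ, 1 ≤ n →
      MvPowerSeries.coeff (Finsupp.equivFunOnFinite.symm ![n, n]) F =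
        (catalan (n - 1) : ℂ) := by
  have hHcoe : (H : MvPowerSeries (Fin 2) ℂ) =
      MvPowerSeries.X 0 + MvPowerSeries.X 1 - 1 := by
    rw [hH, ← MvPolynomial.coeToMvPowerSeries.ringHom_apply, map_sub, map_add, map_one,
      MvPolynomial.coeToMvPowerSeries.ringHom_apply, MvPolynomial.coeToMvPowerSeries.ringHom_apply,
      MvPolynomial.coe_X, MvPolynomial.coe_X]
  have hconst : MvPowerSeries.constantCoeff (H : MvPowerSeries (Fin 2) ℂ) ≠ 0 := by
    rw [hHcoe]; simp
  have hinv : (H : MvPowerSeries (Fin 2) ℂ)⁻¹ = Tser := by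
    rw [MvPowerSeries.inv_eq_iff_mul_eq_one hconst, hHcoe, mul_comm, Hmul]
  have hGcoe : (G : MvPowerSeries (Fin 2) ℂ) =
      MvPowerSeries.X 1 * (2 * MvPowerSeries.X 1 - 1) := by
    rw [hG, ← MvPolynomial.coeToMvPowerSeries.ringHom_apply, map_mul, map_sub, map_mul,
      map_one, map_ofNat]
    simp only [MvPolynomial.coeToMvPowerSeries.ringHom_apply, MvPolynomial.coe_X]
  have key : ∀ d : Fin 2 →₀ ℕ, MvPowerSeries.coeff d F =
      if 1 ≤ d 1 then
        (if 2 ≤ d 1 then 2 * -(((d 0 + (d 1 - 2)).choose (d 0) : ℂ)) else 0)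
          - -(((d 0 + (d 1 - 1)).choose (d 0) : ℂ))
      else 0 := by
    intro d
    rw [hF, hinv, hGcoe]
    rw [show MvPowerSeries.X 1 * (2 * MvPowerSeries.X 1 - 1) * Tser
          = MvPowerSeries.X 1 * (MvPowerSeries.X 1 * Tser + MvPowerSeries.X 1 * Tser - Tser) by
        ring]
    rw [coeffXmulT]
    rcases le_or_gt 1 (d 1) with h | h
    · rw [if_pos h, map_sub, map_add, coeffXmulT, Tser_coeff]
      have e1 : ((d - Finsupp.single 1 1 : Fin 2 →₀ ℕ)) 0 = d 0 := by
        simp [Finsupp.tsub_apply, Finsupp.single_apply]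
      have e2 : ((d - Finsupp.single 1 1 : Fin 2 →₀ ℕ)) 1 = d 1 - 1 := by
        simp [Finsupp.tsub_apply, Finsupp.single_apply]
      have e3 : ((d - Finsupp.single 1 1 - Finsupp.single 1 1 : Fin 2 →₀ ℕ)) 0 = d 0 := by
        simp [Finsupp.tsub_apply, Finsupp.single_apply]
      have e4 : ((d - Finsupp.single 1 1 - Finsupp.single 1 1 : Fin 2 →₀ ℕ)) 1
          = d 1 - 1 - 1 := by
        simp [Finsupp.tsub_apply, Finsupp.single_apply]
      rw [Tser_coeff, e1, e2, e3, e4, show d 1 - 1 - 1 = d 1 - 2 by omega]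
      rcases le_or_gt 2 (d 1) with h2 | h2
      · rw [if_pos (show 1 ≤ d 1 - 1 by omega), if_pos h2, if_pos h]
        ring
      · rw [if_neg (show ¬(1 ≤ d 1 - 1) by omega), if_neg (show ¬(2 ≤ d 1) by omega), if_pos h]
        ring
    · rw [if_neg (show ¬(1 ≤ d 1) by omega), if_neg (show ¬(1 ≤ d 1) by omega)]
  constructor
  · rw [key]
    norm_num
  · intro n hn
    rw [key]
    have e0 : (Finsupp.equivFunOnFinite.symm ![n, n] : Fin 2 →₀ ℕ) 0 = n := by
      simp
    have e1 : (Finsupp.equivFunOnFinite.symm ![n, n] : Fin 2 →₀ ℕ) 1 = n := by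
      simp
    rw [e0, e1, if_pos hn]
    rcases le_or_gt 2 n with h2 | h2
    · obtain ⟨m, rfl⟩ : ∃ m, n = m + 1 := ⟨n - 1, by omega⟩
      rw [if_pos h2]
      rw [show m + 1 + (m + 1 - 1) = 2 * m + 1 by omega,
        show m + 1 + (m + 1 - 2) = 2 * m by omega, Nat.add_sub_cancel]
      linear_combination catalan_formula m
    · interval_cases n
      rw [if_neg (by omega)]
      norm_num
end

section
/- The Catalan numbers satisfy the two-term asymptotic expansion: there exists a constant K > 0 and N ∈ ℕ such that for all n ≥ N, |C_{n-1} − 4^n·(1/(4√π · n^{3/2}) + 3/(32√π · n^{5/2}))| ≤ K·4^n·n^{-7/2}, where C_m = (1/(m+1))·binom(2m, m) is the m-th Catalan number. -/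
set_option maxHeartbeats 1000000

open Real Filter Topology

noncomputable def qcb (m : ℕ) : ℝ := (Nat.centralBinom m : ℝ) / 4 ^ m

noncomputable def ttc (m : ℕ) : ℝ := qcb m ^ 2 * ((m : ℝ) + 1/4)

lemma qcb_pos (m : ℕ) : 0 < qcb m :=
  div_pos (by exact_mod_cast m.centralBinom_pos) (by positivity)

lemma qcb_succ (m : ℕ) : qcb (m+1) = qcb m * ((2*m+1)/(2*m+2)) := by
  have h : ((m:ℝ)+1) * (Nat.centralBinom (m+1) : ℝ)
      = 2*(2*(m:ℝ)+1) * (Nat.centralBinom m : ℝ) := by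
    exact_mod_cast congrArg (Nat.cast (R := ℝ)) (Nat.succ_mul_centralBinom_succ m)
  have hm : ((m:ℝ)+1) ≠ 0 := by positivity
  unfold qcb
  rw [pow_succ]
  field_simp
  ring_nf
  ring_nf at h
  nlinarith [h, pow_pos (show (0:ℝ) < 4 by norm_num) m]


noncomputable def Wp (k : ℕ) : ℝ :=
  ∏ i ∈ Finset.range k, ((2 : ℝ) * i + 2) / (2 * i + 1) * ((2 * i + 2) / (2 * i + 3))

lemma qcb_sq_W (k : ℕ) : (qcb k ^ 2 * (2 * k + 1)) * Wp k = 1 := by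
  induction k with
  | zero => simp [qcb, Wp, Nat.centralBinom]
  | succ k ih =>
    have h1 : (2*(k:ℝ)+1) ≠ 0 := by positivity
    have h2 : (2*(k:ℝ)+2) ≠ 0 := by positivity
    have h3 : (2*(k:ℝ)+3) ≠ 0 := by positivity
    rw [Wp, Finset.prod_range_succ, ← Wp, qcb_succ]
    push_cast
    field_simp
    linear_combination (2*(k:ℝ)+3) * ih

lemma tendsto_qcb_sq : Tendsto (fun k : ℕ => qcb k ^ 2 * (2 * k + 1)) atTop (𝓝 (2 / π)) := by
  have hW := Real.tendsto_prod_pi_div_two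
  have hWne : ∀ k, Wp k ≠ 0 := by
    intro k h
    have := qcb_sq_W k
    rw [h, mul_zero] at this
    norm_num at this
  have heq : (fun k : ℕ => qcb k ^ 2 * (2 * k + 1)) = fun k => (Wp k)⁻¹ := by
    funext k
    exact eq_inv_of_mul_eq_one_left (qcb_sq_W k)
  rw [heq, show (2/π : ℝ) = (π/2)⁻¹ by rw [inv_div]]
  exact hW.inv₀ (by positivity)


lemma tendsto_ttc : Tendsto ttc atTop (𝓝 (1/π)) := by
  have hz : Tendsto (fun k : ℕ => 1/(2*(k:ℝ)+1)) atTop (𝓝 0) := by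
    apply tendsto_const_nhds.div_atTop
    exact tendsto_atTop_add_const_right atTop 1 (tendsto_natCast_atTop_atTop.const_mul_atTop two_pos)
  have h2 : Tendsto (fun k : ℕ => ((k:ℝ) + 1/4)/(2*(k:ℝ)+1)) atTop (𝓝 (1/2)) := by
    have heq : (fun k : ℕ => ((k:ℝ) + 1/4)/(2*(k:ℝ)+1))
        = fun k : ℕ => 1/2 - (1/4)*(1/(2*(k:ℝ)+1)) := by
      funext k
      have : (2*(k:ℝ)+1) ≠ 0 := by positivity
      field_simp
      ring
    rw [heq]
    have := (hz.const_mul (1/4 : ℝ)).const_sub (1/2 : ℝ)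
    simpa using this
  have heq : ttc = fun k : ℕ => (qcb k ^ 2 * (2 * k + 1)) * (((k:ℝ) + 1/4)/(2*(k:ℝ)+1)) := by
    funext k
    have : (2*(k:ℝ)+1) ≠ 0 := by positivity
    unfold ttc
    field_simp
  rw [heq, show (1/π : ℝ) = (2/π) * (1/2) by ring]
  exact tendsto_qcb_sq.mul h2

lemma ttc_succ (m : ℕ) : ttc (m+1) = ttc m + qcb m ^ 2 / (16 * ((m:ℝ)+1)^2) := by
  unfold ttc
  rw [qcb_succ]
  have h2 : (2*(m:ℝ)+2) ≠ 0 := by positivity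
  push_cast
  field_simp
  ring

lemma ttc_mono : Monotone ttc := by
  apply monotone_nat_of_le_succ
  intro m
  rw [ttc_succ]
  have h : 0 < qcb m ^ 2 / (16 * ((m:ℝ)+1)^2) :=
    div_pos (pow_pos (qcb_pos m) 2) (by positivity)
  linarith

lemma ttc_le (m : ℕ) : ttc m ≤ 1/π := ttc_mono.ge_of_tendsto tendsto_ttc m

lemma ttc_lb (m : ℕ) (hm : 1 ≤ m) : 1/π ≤ ttc m + 1/(32*π*(m:ℝ)^2) := by
  have key : ∀ M, m ≤ M → ttc M ≤ ttc m + (1/(32*π))*(1/(m:ℝ)^2 - 1/(M:ℝ)^2) := by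
    intro M hM
    induction M, hM using Nat.le_induction with
    | base => simp
    | succ M hM ih =>
      have hM1 : (1:ℝ) ≤ (M:ℝ) := by exact_mod_cast le_trans hm hM
      have hMpos : (0:ℝ) < (M:ℝ) := by linarith
      have hπ : π * (1/π) = 1 := by field_simp
      -- π * qcb M ^2 * (4M+1) ≤ 4
      have hA : π * qcb M ^ 2 * (4*(M:ℝ)+1) ≤ 4 := by
        have h := ttc_le M
        unfold ttc at h
        nlinarith [pi_pos]
      have step : qcb M ^ 2 / (16 * ((M:ℝ)+1)^2)
          ≤ (1/(32*π)) * (1/(M:ℝ)^2 - 1/((M:ℝ)+1)^2) := by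
        have hd : (1:ℝ)/(M:ℝ)^2 - 1/((M:ℝ)+1)^2 = (2*(M:ℝ)+1)/((M:ℝ)^2*((M:ℝ)+1)^2) := by
          field_simp
          ring
        have hone : (1/(32*π))*((2*(M:ℝ)+1)/((M:ℝ)^2*((M:ℝ)+1)^2))
            = (2*(M:ℝ)+1)/(32*π*((M:ℝ)^2*((M:ℝ)+1)^2)) := by
          rw [div_mul_div_comm, one_mul]
        rw [hd, hone, div_le_div_iff₀ (by positivity) (by positivity)]
        have hpos : (0:ℝ) < 4*(M:ℝ)+1 := by positivity
        nlinarith [hA, hpos, mul_nonneg pi_pos.le (sq_nonneg (qcb M)),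
          mul_le_mul_of_nonneg_left hA (show (0:ℝ) ≤ 32*(M:ℝ)^2*((M:ℝ)+1)^2 by positivity)]
      rw [ttc_succ]
      push_cast
      linarith
  have hev : ∀ᶠ M in atTop, ttc M ≤ ttc m + 1/(32*π*(m:ℝ)^2) := by
    filter_upwards [eventually_ge_atTop m] with M hM
    have h := key M hM
    have hmpos : (0:ℝ) < (m:ℝ) := by exact_mod_cast hm
    have h2 : (0:ℝ) ≤ 1/(M:ℝ)^2 := by positivity
    have h3 : (1/(32*π))*(1/(m:ℝ)^2) = 1/(32*π*(m:ℝ)^2) := by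
      field_simp
    have h4 : (0:ℝ) ≤ (1/(32*π))*(1/(M:ℝ)^2) := by positivity
    nlinarith [h, h3, h4]
  exact le_of_tendsto tendsto_ttc hev

lemma sqrt_ineq_one (x s R : ℝ) (hx : 4 ≤ x) (hs0 : 0 < s) (hR0 : 0 < R)
    (hs2 : s^2 = x) (hR2 : R^2 = x - 3/4) : 8*x^2*s ≤ R*(8*x^2+3*x+80) := by
  apply le_of_pow_le_pow_left₀ two_ne_zero (by positivity)
  have e1 : (8*x^2*s)^2 = 64*x^4*x := by rw [mul_pow, hs2]; ring
  have e2 : (R*(8*x^2+3*x+80))^2 = (x-3/4)*(8*x^2+3*x+80)^2 := by rw [mul_pow, hR2]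
  rw [e1, e2]
  nlinarith [mul_le_mul_of_nonneg_left hx (sq_nonneg x), sq_nonneg x]

lemma sqrt_ineq_two (x s R : ℝ) (hx : 4 ≤ x) (hs0 : 0 < s) (hR0 : 0 < R)
    (hs2 : s^2 = x) (hR2 : R^2 = x - 3/4) : R*(8*x+3) ≤ 8*x*s := by
  apply le_of_pow_le_pow_left₀ two_ne_zero (by positivity)
  have e1 : (R*(8*x+3))^2 = (x-3/4)*(8*x+3)^2 := by rw [mul_pow, hR2]
  have e2 : (8*x*s)^2 = 64*x^2*x := by rw [mul_pow, hs2]; ring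
  rw [e1, e2]
  nlinarith

lemma sqrt_ineq_three (x s R : ℝ) (hx : 4 ≤ x) (hs0 : 0 < s) (hR0 : 0 < R)
    (hs2 : s^2 = x) (hR2 : R^2 = x - 3/4) : s ≤ 2*R := by
  apply le_of_pow_le_pow_left₀ two_ne_zero (by positivity)
  have e1 : (2*R)^2 = 4*(x-3/4) := by rw [mul_pow, hR2]; ring
  rw [hs2, e1]
  nlinarith

lemma core_ineq (x s P R q : ℝ) (hx : 4 ≤ x) (hs0 : 0 < s) (hP1 : 1 < P) (hR0 : 0 < R)
    (hq0 : 0 < q) (hs2 : s^2 = x) (hR2 : R^2 = x - 3/4)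
    (hq1 : q*(P*R) ≤ 1) (hq2 : 1 - 1/(8*x^2) ≤ q*(P*R)) :
    |q/(4*x) - (1/(4*P*(x*s)) + 3/(32*P*(x^2*s)))| ≤ 10*((x^3*s)⁻¹) := by
  have hx0 : (0:ℝ) < x := by linarith
  have hP0 : (0:ℝ) < P := by linarith
  have hxne : x ≠ 0 := hx0.ne'
  have hPne : P ≠ 0 := hP0.ne'
  have hsne : s ≠ 0 := hs0.ne'
  have hi := sqrt_ineq_one x s R hx hs0 hR0 hs2 hR2
  have hii := sqrt_ineq_two x s R hx hs0 hR0 hs2 hR2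
  have hsR := sqrt_ineq_three x s R hx hs0 hR0 hs2 hR2
  have c3 : (8*P*x^2*s*q)*R ≤ (8*x^2+3*x+80)*R := by
    nlinarith [mul_le_mul_of_nonneg_left hq1 (show (0:ℝ) ≤ 8*x^2*s by positivity), hi]
  have hUp : 8*P*x^2*s*q ≤ 8*x^2 + 3*x + 320*P := by
    have h := le_of_mul_le_mul_right c3 hR0
    linarith
  have c1 : 8*x^2*s - s ≤ 8*x^2*s*(q*(P*R)) := by
    have h := mul_le_mul_of_nonneg_left hq2 (show (0:ℝ) ≤ 8*x^2*s by positivity)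
    calc 8*x^2*s - s = 8*x^2*s*(1 - 1/(8*x^2)) := by field_simp
    _ ≤ _ := h
  have c4 : (8*x^2+3*x-2)*R ≤ (8*P*x^2*s*q)*R := by
    nlinarith [c1, mul_le_mul_of_nonneg_left hii hx0.le, hsR]
  have hLo : 8*x^2 + 3*x - 320*P ≤ 8*P*x^2*s*q := by
    have h := le_of_mul_le_mul_right c4 hR0
    linarith
  rw [abs_le]
  constructor
  · have hTl : 1/(4*P*(x*s)) + 3/(32*P*(x^2*s)) - 10*((x^3*s)⁻¹)
        = (8*x^2+3*x-320*P)/(32*P*(x^3*s)) := by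
      field_simp
      ring
    have hfrac : (8*x^2+3*x-320*P)/(32*P*(x^3*s)) ≤ q/(4*x) := by
      rw [div_le_div_iff₀ (by positivity) (by positivity)]
      nlinarith [mul_le_mul_of_nonneg_left hLo (show (0:ℝ) ≤ 4*x by positivity)]
    linarith [hTl ▸ hfrac]
  · have hTu : 1/(4*P*(x*s)) + 3/(32*P*(x^2*s)) + 10*((x^3*s)⁻¹)
        = (8*x^2+3*x+320*P)/(32*P*(x^3*s)) := by
      field_simp
      ring
    have hfrac : q/(4*x) ≤ (8*x^2+3*x+320*P)/(32*P*(x^3*s)) := by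
      rw [div_le_div_iff₀ (by positivity) (by positivity)]
      nlinarith [mul_le_mul_of_nonneg_left hUp (show (0:ℝ) ≤ 4*x by positivity)]
    linarith [hTu ▸ hfrac]

/-- Two-term asymptotic expansion of the Catalan numbers:
`C_{n-1} = 4^n (1/(4√π n^{3/2}) + 3/(32√π n^{5/2}) + O(n^{-7/2}))` as `n → ∞`. -/
theorem catalan_two_term_asymptotics :
    ∃ K : ℝ, 0 < K ∧ ∃ N : ℕ, ∀ n : ℕ, N ≤ n →
      |(catalan (n - 1) : ℝ) -
          (4 : ℝ) ^ n * (1 / (4 * Real.sqrt π * (n : ℝ) ^ ((3 : ℝ) / 2)) +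
            3 / (32 * Real.sqrt π * (n : ℝ) ^ ((5 : ℝ) / 2)))| ≤
        K * (4 : ℝ) ^ n * (n : ℝ) ^ (-(7 : ℝ) / 2) := by
  refine ⟨10, by norm_num, 4, fun n hn => ?_⟩
  have hn1 : 1 ≤ n := by omega
  have hn4 : (4:ℝ) ≤ (n:ℝ) := by exact_mod_cast hn
  have hn0 : (0:ℝ) < (n:ℝ) := by linarith
  set s : ℝ := Real.sqrt n with hs_def
  set P : ℝ := Real.sqrt π with hP_def
  set q : ℝ := qcb (n-1) with hq_def
  have hq0 : 0 < q := qcb_pos (n-1)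
  have hs2 : s^2 = (n:ℝ) := Real.sq_sqrt hn0.le
  have hs0 : 0 < s := Real.sqrt_pos.mpr hn0
  have hP2 : P^2 = π := Real.sq_sqrt pi_pos.le
  have hP1 : 1 < P := by
    rw [hP_def, show (1:ℝ) = Real.sqrt 1 by simp]
    exact Real.sqrt_lt_sqrt (by norm_num) (by linarith [pi_gt_three])
  have hP0 : 0 < P := by linarith
  set R : ℝ := Real.sqrt ((n:ℝ) - 3/4) with hR_def
  have hR2 : R^2 = (n:ℝ) - 3/4 := Real.sq_sqrt (by linarith)
  have hR0 : 0 < R := Real.sqrt_pos.mpr (by linarith)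
  -- cast of n - 1
  have hcast : ((n-1 : ℕ) : ℝ) = (n:ℝ) - 1 := by
    rw [Nat.cast_sub hn1, Nat.cast_one]
  -- bounds from ttc
  have h1 : q^2 * ((n:ℝ) - 3/4) ≤ 1/π := by
    have h := ttc_le (n-1)
    unfold ttc at h
    rw [hcast] at h
    calc q^2 * ((n:ℝ) - 3/4) = q^2 * (((n:ℝ) - 1) + 1/4) := by ring
    _ ≤ 1/π := h
  have h2 : 1/π ≤ q^2 * ((n:ℝ) - 3/4) + 1/(32*π*((n:ℝ)-1)^2) := by
    have h := ttc_lb (n-1) (by omega)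
    unfold ttc at h
    rw [hcast] at h
    calc 1/π ≤ q^2 * (((n:ℝ)-1) + 1/4) + 1/(32*π*((n:ℝ)-1)^2) := h
    _ = q^2 * ((n:ℝ) - 3/4) + 1/(32*π*((n:ℝ)-1)^2) := by ring
  -- upper bound on q
  have hπ1 : π * (1/π) = 1 := by field_simp
  have hqu : q ≤ 1/(P*R) := by
    apply le_of_pow_le_pow_left₀ two_ne_zero (by positivity)
    have hd : (1/(P*R))^2 = 1/(π*((n:ℝ)-3/4)) := by
      rw [div_pow, one_pow, mul_pow, hP2, hR2]
    rw [hd, le_div_iff₀ (mul_pos pi_pos (by linarith : (0:ℝ) < (n:ℝ)-3/4))]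
    nlinarith [mul_le_mul_of_nonneg_left h1 pi_pos.le, hπ1]
  -- lower bound on q
  have hql : (1 - 1/(8*(n:ℝ)^2))/(P*R) ≤ q := by
    apply le_of_pow_le_pow_left₀ two_ne_zero hq0.le
    have hd : ((1 - 1/(8*(n:ℝ)^2))/(P*R))^2 = (1 - 1/(8*(n:ℝ)^2))^2/(π*((n:ℝ)-3/4)) := by
      rw [div_pow, mul_pow, hP2, hR2]
    rw [hd, div_le_iff₀ (mul_pos pi_pos (by linarith : (0:ℝ) < (n:ℝ)-3/4))]
    -- π/(32π(n-1)²) ≤ 1/(8n²)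
    have hsmall' : π * (1 / (32*π*((n:ℝ)-1)^2)) ≤ 1/(8*(n:ℝ)^2) := by
      rw [mul_one_div, div_le_div_iff₀ (mul_pos (by positivity : (0:ℝ) < 32*π)
        (by nlinarith : (0:ℝ) < ((n:ℝ)-1)^2)) (by positivity)]
      nlinarith [mul_le_mul_of_nonneg_left
        (show 8*(n:ℝ)^2 ≤ 32*((n:ℝ)-1)^2 by nlinarith) pi_pos.le]
    have hε : (0:ℝ) < 1/(8*(n:ℝ)^2) := by positivity
    have hε1 : 1/(8*(n:ℝ)^2) ≤ 1 := by
      rw [div_le_one (by positivity)]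
      nlinarith
    -- π q² (n - 3/4) ≥ 1 - 1/(8n²) ≥ (1-1/(8n²))²
    nlinarith [mul_le_mul_of_nonneg_left h2 pi_pos.le, hπ1, hsmall',
      mul_nonneg hε.le (sub_nonneg.mpr hε1)]
  -- product-form bounds on q
  have hPR : (0:ℝ) < P*R := mul_pos hP0 hR0
  have hq1 : q*(P*R) ≤ 1 := (le_div_iff₀ hPR).mp hqu
  have hq2 : 1 - 1/(8*(n:ℝ)^2) ≤ q*(P*R) := (div_le_iff₀ hPR).mp hql
  -- catalan in terms of q
  have hnne : (n:ℝ) ≠ 0 := hn0.ne'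
  have hPne : P ≠ 0 := hP0.ne'
  have hsne : s ≠ 0 := hs0.ne'
  have hcb : (Nat.centralBinom (n-1) : ℝ) = q * 4^(n-1) := by
    rw [hq_def]; unfold qcb; field_simp
  have hcatn : (n:ℝ) * (catalan (n-1) : ℝ) = q * 4^(n-1) := by
    rw [← hcb]
    have h := succ_mul_catalan_eq_centralBinom (n-1)
    have h2 : (n-1+1) = n := by omega
    rw [h2] at h
    exact_mod_cast congrArg (Nat.cast (R:=ℝ)) h
  have h4n : (4:ℝ)^n = 4*4^(n-1) := by
    conv_lhs => rw [show n = (n-1)+1 by omega]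
    rw [pow_succ]; ring
  have hC : (catalan (n-1) : ℝ) = (4:ℝ)^n * (q/(4*(n:ℝ))) := by
    rw [h4n]
    field_simp
    linarith [hcatn]
  -- rpow rewrites
  have h32 : (n:ℝ) ^ ((3:ℝ)/2) = (n:ℝ) * s := by
    rw [show (3:ℝ)/2 = 1 + 1/2 by norm_num, Real.rpow_add hn0, Real.rpow_one,
      hs_def, Real.sqrt_eq_rpow]
  have h52 : (n:ℝ) ^ ((5:ℝ)/2) = (n:ℝ)^2 * s := by
    rw [show (5:ℝ)/2 = ((2:ℕ):ℝ) + 1/2 by norm_num, Real.rpow_add hn0, Real.rpow_natCast,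
      hs_def, Real.sqrt_eq_rpow]
  have h72 : (n:ℝ) ^ (-(7:ℝ)/2) = ((n:ℝ)^3 * s)⁻¹ := by
    rw [show -(7:ℝ)/2 = -(((3:ℕ):ℝ) + 1/2) by norm_num, Real.rpow_neg hn0.le,
      Real.rpow_add hn0, Real.rpow_natCast, hs_def, Real.sqrt_eq_rpow]
  have core : |q/(4*(n:ℝ)) - (1/(4*P*((n:ℝ)*s)) + 3/(32*P*((n:ℝ)^2*s)))|
      ≤ 10*(((n:ℝ)^3*s)⁻¹) :=
    core_ineq (n:ℝ) s P R q hn4 hs0 hP1 hR0 hq0 hs2 hR2 hq1 hq2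
  -- assemble
  rw [h32, h52, h72, hC]
  have habs : |(4:ℝ)^n * (q/(4*(n:ℝ))) -
        (4:ℝ)^n * (1/(4*P*((n:ℝ)*s)) + 3/(32*P*((n:ℝ)^2*s)))|
      = (4:ℝ)^n * |q/(4*(n:ℝ)) - (1/(4*P*((n:ℝ)*s)) + 3/(32*P*((n:ℝ)^2*s)))| := by
    rw [← mul_sub, abs_mul, abs_of_pos (by positivity : (0:ℝ) < (4:ℝ)^n)]
  calc |(4:ℝ)^n * (q/(4*(n:ℝ))) -
        (4:ℝ)^n * (1/(4*P*((n:ℝ)*s)) + 3/(32*P*((n:ℝ)^2*s)))|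
      = (4:ℝ)^n * |q/(4*(n:ℝ)) - (1/(4*P*((n:ℝ)*s)) + 3/(32*P*((n:ℝ)^2*s)))| := habs
    _ ≤ (4:ℝ)^n * (10*(((n:ℝ)^3*s)⁻¹)) :=
        mul_le_mul_of_nonneg_left core (by positivity)
    _ = 10 * (4:ℝ)^n * (((n:ℝ)^3*s)⁻¹) := by ring
end

section
/- Let F = G·H⁻¹ ∈ ℂ[[x₁,x₂]] where G = 2x₁x₂²(2x₂⁵x₁² − 3x₂³x₁ + x₂ + 2x₂²x₁ − 1) and H = x₂⁵x₁² − 2x₂³x₁ + x₂ + 2x₂²x₁ − 2 + 4x₁ (note H(0,0) = −2 ≠ 0). Then there exists a formal power series f ∈ ℂ[[x]] with constant coefficient 0 and coefficient of x equal to 0 satisfying the polynomial equation f⁴ − 2f³ + (1 + 2x)f² − 2xf + 4x³ = 0, such that for every n ∈ ℕ, the coefficient f_n of x^n in f equals the diagonal coefficient F_{(n,n)}. -/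
namespace SupertreesAux

open PowerSeries


/-- coefficients of the square root of a power series with constant term 1 -/
noncomputable def sq (a : PowerSeries ℂ) : ℕ → ℂ
  | 0 => 1
  | (n+1) => (PowerSeries.coeff (n+1) a
      - ∑ i ∈ (Finset.range n).attach, sq a (i.1+1) * sq a (n - i.1)) / 2
  decreasing_by
  · have := i.2; simp only [Finset.mem_range] at this; omega
  · have := i.2; simp only [Finset.mem_range] at this; omega

theorem sq_spec (a : PowerSeries ℂ) (ha : PowerSeries.constantCoeff a = 1) :
    (PowerSeries.mk (sq a)) ^ 2 = a ∧ PowerSeries.coeff 0 (PowerSeries.mk (sq a)) = 1 := by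
  constructor
  · ext n
    rw [pow_two, PowerSeries.coeff_mul]
    rw [Finset.Nat.sum_antidiagonal_eq_sum_range_succ_mk]
    cases n with
    | zero => simpa [sq] using ha.symm
    | succ n =>
      rw [Finset.sum_range_succ, Finset.sum_range_succ']
      have h0 : sq a 0 = 1 := by rw [sq]
      have hlast : sq a (n+1) = (PowerSeries.coeff (n+1) a
          - ∑ i ∈ (Finset.range n).attach, sq a (i.1+1) * sq a (n - i.1)) / 2 := by
        rw [sq]
      rw [Finset.sum_attach (Finset.range n) (fun i => sq a (i+1) * sq a (n - i))] at hlast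
      simp only [PowerSeries.coeff_mk, h0, Nat.sub_zero, Nat.add_sub_cancel_left, one_mul,
        mul_one]
      have : ∀ i ∈ Finset.range n, sq a (i+1) * sq a (n + 1 - (i+1))
          = sq a (i+1) * sq a (n - i) := by
        intro i hi; congr 2; omega
      rw [Finset.sum_congr rfl this]
      rw [hlast, Nat.sub_self, h0]; ring
  · simp [sq]



noncomputable def idx (a b : ℕ) : Fin 2 →₀ ℕ := Finsupp.equivFunOnFinite.symm ![a, b]
@[simp] theorem idx_apply_zero (a b : ℕ) : idx a b 0 = a := rfl
@[simp] theorem idx_apply_one (a b : ℕ) : idx a b 1 = b := rfl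
theorem eq_idx (d : Fin 2 →₀ ℕ) : d = idx (d 0) (d 1) := by
  ext i; fin_cases i <;> simp [idx]
theorem idx_add (a b c e : ℕ) : idx a c + idx b e = idx (a+b) (c+e) := by
  ext i; fin_cases i <;> simp [idx]
theorem idx_eq_iff {a b c e : ℕ} : idx a b = idx c e ↔ a = c ∧ b = e := by
  constructor
  · intro h
    exact ⟨by simpa using congrArg (fun t => t 0) h, by simpa using congrArg (fun t => t 1) h⟩
  · rintro ⟨rfl, rfl⟩; rfl
@[simp] theorem idx_zero : idx 0 0 = 0 := by ext i; fin_cases i <;> simp [idx]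
theorem single_zero_one : Finsupp.single (0 : Fin 2) 1 = idx 1 0 := by
  ext i; fin_cases i <;> simp [idx]
theorem single_one_one : Finsupp.single (1 : Fin 2) 1 = idx 0 1 := by
  ext i; fin_cases i <;> simp [idx]
theorem idx_le_iff {a b c e : ℕ} : idx a b ≤ idx c e ↔ a ≤ c ∧ b ≤ e := by
  rw [Finsupp.le_def]
  exact ⟨fun h => ⟨h 0, h 1⟩, by rintro ⟨h1, h2⟩ i; fin_cases i <;> simpa [idx]⟩
theorem idx_sub (a b c e : ℕ) : idx a b - idx c e = idx (a-c) (b-e) := by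
  ext i; fin_cases i <;> simp [idx, Finsupp.tsub_apply]
theorem idx_lt_sum {a b c e : ℕ} (h : idx a b < idx c e) : a + b < c + e := by
  rcases lt_iff_le_and_ne.mp h with ⟨hle, hne⟩
  rw [Finsupp.le_def] at hle
  have h0 : a ≤ c := hle 0
  have h1 : b ≤ e := hle 1
  rcases Nat.lt_or_ge (a+b) (c+e) with h' | h'
  · exact h'
  · exfalso; apply hne; rw [idx_eq_iff]; omega

open MvPowerSeries

local notation "M" => MvPowerSeries (Fin 2) ℂ

/-- supported on `{(a,b) : a ≥ b}` (lower triangular) -/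
def lowT (u : M) : Prop := ∀ a b : ℕ, a < b → MvPowerSeries.coeff (idx a b) u = 0
/-- supported on `{(a,b) : a ≤ b}` (upper triangular) -/
def upT (u : M) : Prop := ∀ a b : ℕ, b < a → MvPowerSeries.coeff (idx a b) u = 0

theorem decomp_pair (p q : Fin 2 →₀ ℕ) {a b : ℕ}
    (hp : p + q = idx a b) : p 0 + q 0 = a ∧ p 1 + q 1 = b := by
  exact ⟨by simpa using congrArg (fun t => t 0) hp, by simpa using congrArg (fun t => t 1) hp⟩

theorem lowT_mul {u v : M} (hu : lowT u) (hv : lowT v) : lowT (u * v) := by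
  intro a b h
  rw [MvPowerSeries.coeff_mul]
  apply Finset.sum_eq_zero
  rintro ⟨p, q⟩ hp
  rw [Finset.HasAntidiagonal.mem_antidiagonal] at hp
  obtain ⟨h0, h1⟩ := decomp_pair p q hp
  rcases (show p 0 < p 1 ∨ q 0 < q 1 by omega) with hc | hc
  · have : MvPowerSeries.coeff p u = 0 := by rw [eq_idx p]; exact hu _ _ hc
    rw [this, zero_mul]
  · have : MvPowerSeries.coeff q v = 0 := by rw [eq_idx q]; exact hv _ _ hc
    rw [this, mul_zero]

theorem upT_mul {u v : M} (hu : upT u) (hv : upT v) : upT (u * v) := by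
  intro a b h
  rw [MvPowerSeries.coeff_mul]
  apply Finset.sum_eq_zero
  rintro ⟨p, q⟩ hp
  rw [Finset.HasAntidiagonal.mem_antidiagonal] at hp
  obtain ⟨h0, h1⟩ := decomp_pair p q hp
  rcases (show p 1 < p 0 ∨ q 1 < q 0 by omega) with hc | hc
  · have : MvPowerSeries.coeff p u = 0 := by rw [eq_idx p]; exact hu _ _ hc
    rw [this, zero_mul]
  · have : MvPowerSeries.coeff q v = 0 := by rw [eq_idx q]; exact hv _ _ hc
    rw [this, mul_zero]

theorem lowT_inv {u : M} (hu : lowT u) : lowT u⁻¹ := by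
  suffices H : ∀ N a b : ℕ, a + b ≤ N → a < b → MvPowerSeries.coeff (idx a b) u⁻¹ = 0 by
    intro a b h; exact H (a+b) a b le_rfl h
  intro N
  induction N with
  | zero => intro a b h1 h2; omega
  | succ N ih =>
    intro a b h1 h2
    rw [MvPowerSeries.coeff_inv, if_neg (by
      intro hc
      have : a = 0 := by simpa using congrArg (fun t => t 0) hc
      have : b = 0 := by simpa using congrArg (fun t => t 1) hc
      omega)]
    apply mul_eq_zero_of_right
    apply Finset.sum_eq_zero
    rintro ⟨p, q⟩ hpq
    rw [Finset.HasAntidiagonal.mem_antidiagonal] at hpq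
    obtain ⟨h0, h1⟩ := decomp_pair p q hpq
    split_ifs with hlt
    · rcases (show p 0 < p 1 ∨ q 0 < q 1 by omega) with hc | hc
      · have : MvPowerSeries.coeff p u = 0 := by rw [eq_idx p]; exact hu _ _ hc
        rw [this, zero_mul]
      · have hlt' : idx (q 0) (q 1) < idx a b := by rw [← eq_idx q]; exact hlt
        have hsum : q 0 + q 1 < a + b := idx_lt_sum hlt'
        have : MvPowerSeries.coeff q u⁻¹ = 0 := by
          rw [eq_idx q]; exact ih (q 0) (q 1) (by omega) hc
        rw [this, mul_zero]
    · rfl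

theorem upT_inv {u : M} (hu : upT u) : upT u⁻¹ := by
  suffices H : ∀ N a b : ℕ, a + b ≤ N → b < a → MvPowerSeries.coeff (idx a b) u⁻¹ = 0 by
    intro a b h; exact H (a+b) a b le_rfl h
  intro N
  induction N with
  | zero => intro a b h1 h2; omega
  | succ N ih =>
    intro a b h1 h2
    rw [MvPowerSeries.coeff_inv, if_neg (by
      intro hc
      have : a = 0 := by simpa using congrArg (fun t => t 0) hc
      omega)]
    apply mul_eq_zero_of_right
    apply Finset.sum_eq_zero
    rintro ⟨p, q⟩ hpq
    rw [Finset.HasAntidiagonal.mem_antidiagonal] at hpq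
    obtain ⟨h0, h1⟩ := decomp_pair p q hpq
    split_ifs with hlt
    · rcases (show p 1 < p 0 ∨ q 1 < q 0 by omega) with hc | hc
      · have : MvPowerSeries.coeff p u = 0 := by rw [eq_idx p]; exact hu _ _ hc
        rw [this, zero_mul]
      · have hsum : q 0 + q 1 < a + b := by
          exact idx_lt_sum (a := q 0) (b := q 1) (by rw [← eq_idx q]; exact hlt)
        have : MvPowerSeries.coeff q u⁻¹ = 0 := by
          rw [eq_idx q]; exact ih (q 0) (q 1) (by omega) hc
        rw [this, mul_zero]
    · rfl

theorem coeff_diag_mul {u v : M} (hu : upT u) (hv : upT v) (n : ℕ) :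
    MvPowerSeries.coeff (idx n n) (u * v) =
      ∑ k ∈ Finset.range (n+1),
        MvPowerSeries.coeff (idx k k) u * MvPowerSeries.coeff (idx (n-k) (n-k)) v := by
  classical
  rw [MvPowerSeries.coeff_mul]
  have hfil : ∑ p ∈ Finset.filter (fun p => p.1 0 = p.1 1) (Finset.HasAntidiagonal.antidiagonal (idx n n)),
      MvPowerSeries.coeff p.1 u * MvPowerSeries.coeff p.2 v =
      ∑ p ∈ Finset.HasAntidiagonal.antidiagonal (idx n n),
      MvPowerSeries.coeff p.1 u * MvPowerSeries.coeff p.2 v := by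
    apply Finset.sum_filter_of_ne
    rintro ⟨p, q⟩ hpq hne
    rw [Finset.HasAntidiagonal.mem_antidiagonal] at hpq
    obtain ⟨h0, h1⟩ := decomp_pair p q hpq
    by_contra hc
    have hc' : ¬ (p 0 = p 1) := hc
    rcases Nat.lt_or_ge (p 1) (p 0) with h | h
    · exact hne (by
        have : MvPowerSeries.coeff p u = 0 := by rw [eq_idx p]; exact hu _ _ h
        rw [this, zero_mul])
    · have hq : q 1 < q 0 := by omega
      exact hne (by
        have : MvPowerSeries.coeff q v = 0 := by rw [eq_idx q]; exact hv _ _ hq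
        rw [this, mul_zero])
  rw [← hfil]
  refine Finset.sum_bij' (fun p _ => p.1 0) (fun k _ => (idx k k, idx (n-k) (n-k)))
    ?_ ?_ ?_ ?_ ?_
  · rintro ⟨p, q⟩ hp
    simp only [Finset.mem_filter, Finset.HasAntidiagonal.mem_antidiagonal] at hp
    obtain ⟨h0, h1⟩ := decomp_pair p q hp.1
    simp only [Finset.mem_range]; omega
  · intro k hk
    simp only [Finset.mem_range] at hk
    simp only [Finset.mem_filter, Finset.HasAntidiagonal.mem_antidiagonal]
    refine ⟨by rw [idx_add]; rw [idx_eq_iff]; omega, by simp⟩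
  · rintro ⟨p, q⟩ hp
    simp only [Finset.mem_filter, Finset.HasAntidiagonal.mem_antidiagonal] at hp
    obtain ⟨h0, h1⟩ := decomp_pair p q hp.1
    have hd := hp.2
    have hp1 : p = idx (p 0) (p 0) := by
      nth_rewrite 1 [eq_idx p]; rw [idx_eq_iff]; omega
    have hq1 : q = idx (n - p 0) (n - p 0) := by
      nth_rewrite 1 [eq_idx q]; rw [idx_eq_iff]; omega
    dsimp only
    rw [Prod.mk.injEq]
    exact ⟨hp1.symm, hq1.symm⟩
  · intro k hk; simp
  · rintro ⟨p, q⟩ hp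
    simp only [Finset.mem_filter, Finset.HasAntidiagonal.mem_antidiagonal] at hp
    obtain ⟨h0, h1⟩ := decomp_pair p q hp.1
    have hd := hp.2
    have hp1 : p = idx (p 0) (p 0) := by
      nth_rewrite 1 [eq_idx p]; rw [idx_eq_iff]; omega
    have hq1 : q = idx (n - p 0) (n - p 0) := by
      nth_rewrite 1 [eq_idx q]; rw [idx_eq_iff]; omega
    show MvPowerSeries.coeff p u * MvPowerSeries.coeff q v =
      MvPowerSeries.coeff (idx (p 0) (p 0)) u *
        MvPowerSeries.coeff (idx (n - p 0) (n - p 0)) v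
    rw [← hp1, ← hq1]


open MvPowerSeries in
/-- diagonal embedding of univariate power series into bivariate ones -/
noncomputable def Phi (u : PowerSeries ℂ) : MvPowerSeries (Fin 2) ℂ :=
  fun d => if d 0 = d 1 then PowerSeries.coeff (d 0) u else 0

theorem coeff_Phi (u : PowerSeries ℂ) (d : Fin 2 →₀ ℕ) :
    MvPowerSeries.coeff d (Phi u) =
      if d 0 = d 1 then PowerSeries.coeff (d 0) u else 0 := rfl

theorem coeff_Phi_diag (u : PowerSeries ℂ) (n : ℕ) :
    MvPowerSeries.coeff (idx n n) (Phi u) = PowerSeries.coeff n u := by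
  rw [coeff_Phi]; simp

theorem coeff_Phi_off (u : PowerSeries ℂ) {a b : ℕ} (h : a ≠ b) :
    MvPowerSeries.coeff (idx a b) (Phi u) = 0 := by
  rw [coeff_Phi]; simp [h]

theorem Phi_lowT (u : PowerSeries ℂ) : lowT (Phi u) := by
  intro a b h; exact coeff_Phi_off u (by omega)

theorem Phi_upT (u : PowerSeries ℂ) : upT (Phi u) := by
  intro a b h; exact coeff_Phi_off u (by omega)

theorem Phi_add (u v : PowerSeries ℂ) : Phi (u + v) = Phi u + Phi v := by
  apply MvPowerSeries.ext; intro d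
  rw [map_add, coeff_Phi, coeff_Phi, coeff_Phi, map_add]
  split_ifs <;> simp

theorem Phi_one : Phi 1 = 1 := by
  apply MvPowerSeries.ext; intro d
  rw [coeff_Phi, MvPowerSeries.coeff_one]
  by_cases h : d 0 = d 1
  · rw [if_pos h, PowerSeries.coeff_one]
    by_cases h0 : d 0 = 0
    · rw [if_pos h0, if_pos]
      nth_rewrite 1 [eq_idx d]; rw [show d 1 = 0 by omega, h0, idx_zero]
    · rw [if_neg h0, if_neg]
      intro hc; apply h0
      have := congrArg (fun t => t 0) hc; simpa using this
  · rw [if_neg h, if_neg]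
    intro hc
    apply h
    have h0 := congrArg (fun t => t 0) hc
    have h1 := congrArg (fun t => t 1) hc
    simp at h0 h1; omega

theorem Phi_mul (u v : PowerSeries ℂ) : Phi (u * v) = Phi u * Phi v := by
  suffices h : ∀ a b : ℕ, MvPowerSeries.coeff (idx a b) (Phi (u*v)) =
      MvPowerSeries.coeff (idx a b) (Phi u * Phi v) by
    apply MvPowerSeries.ext; intro d; rw [eq_idx d]; exact h _ _
  intro a b
  rcases Nat.lt_trichotomy a b with h | h | h
  · rw [coeff_Phi_off _ (by omega), lowT_mul (Phi_lowT u) (Phi_lowT v) a b h]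
  · subst h
    rw [coeff_Phi_diag, coeff_diag_mul (Phi_upT u) (Phi_upT v), PowerSeries.coeff_mul,
      Finset.Nat.sum_antidiagonal_eq_sum_range_succ_mk]
    exact Finset.sum_congr rfl fun k _ => by rw [coeff_Phi_diag, coeff_Phi_diag]
  · rw [coeff_Phi_off _ (by omega), upT_mul (Phi_upT u) (Phi_upT v) a b h]

/-- `Phi` as a ring homomorphism -/
noncomputable def PhiHom : PowerSeries ℂ →+* MvPowerSeries (Fin 2) ℂ where
  toFun := Phi
  map_one' := Phi_one
  map_mul' := Phi_mul
  map_zero' := by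
    apply MvPowerSeries.ext; intro d; rw [coeff_Phi]; simp
  map_add' := Phi_add

@[simp] theorem PhiHom_apply (u : PowerSeries ℂ) : PhiHom u = Phi u := rfl

theorem X0_mul_X1 : (MvPowerSeries.X 0 : MvPowerSeries (Fin 2) ℂ) * MvPowerSeries.X 1 =
    MvPowerSeries.monomial (idx 1 1) 1 := by
  rw [MvPowerSeries.X_def, MvPowerSeries.X_def, MvPowerSeries.monomial_mul_monomial,
    single_zero_one, single_one_one, idx_add, one_mul]

theorem Phi_X : Phi PowerSeries.X = (MvPowerSeries.X 0 : MvPowerSeries (Fin 2) ℂ) *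
    MvPowerSeries.X 1 := by
  apply MvPowerSeries.ext; intro d
  rw [X0_mul_X1, MvPowerSeries.coeff_monomial, coeff_Phi]
  by_cases h : d 0 = d 1
  · rw [if_pos h, PowerSeries.coeff_X]
    by_cases h1 : d 0 = 1
    · rw [if_pos h1, if_pos]
      nth_rewrite 1 [eq_idx d]; rw [h1, show d 1 = 1 by omega]
    · rw [if_neg h1, if_neg]
      intro hc; apply h1; simpa using congrArg (fun t => t 0) hc
  · rw [if_neg h, if_neg]
    intro hc; apply h
    have h0 := congrArg (fun t => t 0) hc
    have h1 := congrArg (fun t => t 1) hc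
    simp at h0 h1; omega

theorem constantCoeff_Phi (u : PowerSeries ℂ) :
    MvPowerSeries.constantCoeff (Phi u) = PowerSeries.coeff 0 u := by
  rw [← MvPowerSeries.coeff_zero_eq_constantCoeff_apply, ← idx_zero, coeff_Phi_diag]

/-- extract the diagonal of a bivariate power series -/
noncomputable def dg (u : MvPowerSeries (Fin 2) ℂ) : PowerSeries ℂ :=
  PowerSeries.mk fun n => MvPowerSeries.coeff (idx n n) u

theorem coeff_dg (u : MvPowerSeries (Fin 2) ℂ) (n : ℕ) :
    PowerSeries.coeff n (dg u) = MvPowerSeries.coeff (idx n n) u :=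
  PowerSeries.coeff_mk _ _

theorem dg_mul {u v : MvPowerSeries (Fin 2) ℂ} (hu : upT u) (hv : upT v) :
    dg (u * v) = dg u * dg v := by
  ext n
  rw [coeff_dg, coeff_diag_mul hu hv, PowerSeries.coeff_mul,
    Finset.Nat.sum_antidiagonal_eq_sum_range_succ_mk]
  exact Finset.sum_congr rfl fun k _ => by rw [coeff_dg, coeff_dg]

theorem dg_Phi (u : PowerSeries ℂ) : dg (Phi u) = u := by
  ext n; rw [coeff_dg, coeff_Phi_diag]

-- coefficient extraction helpers
theorem coeff_X1_mul (u : MvPowerSeries (Fin 2) ℂ) (n m : ℕ) :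
    MvPowerSeries.coeff (idx n (m+1)) (MvPowerSeries.X 1 * u) =
      MvPowerSeries.coeff (idx n m) u := by
  rw [MvPowerSeries.X_def, MvPowerSeries.coeff_monomial_mul, single_one_one,
    if_pos (idx_le_iff.mpr ⟨Nat.zero_le _, Nat.le_add_left _ _⟩), idx_sub, one_mul]
  norm_num

theorem upT_X1 : upT (MvPowerSeries.X 1 : MvPowerSeries (Fin 2) ℂ) := by
  intro a b h
  rw [MvPowerSeries.coeff_X, single_one_one, if_neg]
  rw [idx_eq_iff]; omega

theorem single_single (a b : ℕ) :
    Finsupp.single (0 : Fin 2) a + Finsupp.single 1 b = idx a b := by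
  ext i; fin_cases i <;> simp [idx]

theorem X0_mul_X1pow (k : ℕ) : (MvPowerSeries.X 0 : MvPowerSeries (Fin 2) ℂ) *
    MvPowerSeries.X 1 ^ k = MvPowerSeries.monomial (idx 1 k) 1 := by
  rw [MvPowerSeries.X_def, MvPowerSeries.X_pow_eq, MvPowerSeries.monomial_mul_monomial,
    one_mul, show Finsupp.single (0:Fin 2) 1 = Finsupp.single (0:Fin 2) 1 from rfl]
  rw [single_single]

theorem upT_X0X1sq : upT ((MvPowerSeries.X 0 : MvPowerSeries (Fin 2) ℂ) *
    MvPowerSeries.X 1 ^ 2) := by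
  intro a b h
  rw [X0_mul_X1pow, MvPowerSeries.coeff_monomial, if_neg]
  rw [idx_eq_iff]; omega

theorem lowT_X0 : lowT (MvPowerSeries.X 0 : MvPowerSeries (Fin 2) ℂ) := by
  intro a b h
  rw [MvPowerSeries.coeff_X, single_zero_one, if_neg]
  rw [idx_eq_iff]; omega

theorem upT_one : upT (1 : MvPowerSeries (Fin 2) ℂ) := by
  intro a b h
  rw [MvPowerSeries.coeff_one, if_neg]
  intro hc
  have : a = 0 := by simpa using congrArg (fun t => t 0) hc
  omega

theorem lowT_one : lowT (1 : MvPowerSeries (Fin 2) ℂ) := by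
  intro a b h
  rw [MvPowerSeries.coeff_one, if_neg]
  intro hc
  have : b = 0 := by simpa using congrArg (fun t => t 1) hc
  omega

theorem upT_add {u v} (hu : upT u) (hv : upT v) : upT (u + v) := by
  intro a b h; rw [map_add, hu a b h, hv a b h, add_zero]

theorem upT_neg {u} (hu : upT u) : upT (-u) := by
  intro a b h; rw [map_neg, hu a b h, neg_zero]

theorem upT_sub {u v} (hu : upT u) (hv : upT v) : upT (u - v) := by
  intro a b h; rw [map_sub, hu a b h, hv a b h, sub_zero]

theorem lowT_add {u v} (hu : lowT u) (hv : lowT v) : lowT (u + v) := by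
  intro a b h; rw [map_add, hu a b h, hv a b h, add_zero]

theorem lowT_sub {u v} (hu : lowT u) (hv : lowT v) : lowT (u - v) := by
  intro a b h; rw [map_sub, hu a b h, hv a b h, sub_zero]

theorem dg_X1 : dg (MvPowerSeries.X 1 : MvPowerSeries (Fin 2) ℂ) = 0 := by
  ext n
  rw [coeff_dg, MvPowerSeries.coeff_X, single_one_one, if_neg, map_zero]
  rw [idx_eq_iff]; omega

theorem dg_X0X1sq : dg ((MvPowerSeries.X 0 : MvPowerSeries (Fin 2) ℂ) *
    MvPowerSeries.X 1 ^ 2) = 0 := by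
  ext n
  rw [coeff_dg, map_zero, X0_mul_X1pow, MvPowerSeries.coeff_monomial, if_neg]
  rw [idx_eq_iff]; omega

theorem coeff_four_X0X1cube (n : ℕ) :
    MvPowerSeries.coeff (idx n (n+1))
      ((4 : MvPowerSeries (Fin 2) ℂ) * (MvPowerSeries.X 0 * MvPowerSeries.X 1 ^ 3)) = 0 := by
  rw [show (4 : MvPowerSeries (Fin 2) ℂ) = MvPowerSeries.C 4 from
    (map_ofNat (MvPowerSeries.C) 4).symm, MvPowerSeries.coeff_C_mul,
    X0_mul_X1pow, MvPowerSeries.coeff_monomial, if_neg, mul_zero]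
  rw [idx_eq_iff]; omega

theorem lowT_inv_of (u : MvPowerSeries (Fin 2) ℂ) (hu : lowT u) {n m : ℕ} (h : n < m)
    (v : MvPowerSeries (Fin 2) ℂ) (hv : lowT v) :
    MvPowerSeries.coeff (idx n m) (u * v⁻¹) = 0 :=
  lowT_mul hu (lowT_inv hv) n m h

theorem coeff_one_sq (u : PowerSeries ℂ) :
    PowerSeries.coeff 1 (u^2) = 2 * (PowerSeries.coeff 0 u) * (PowerSeries.coeff 1 u) := by
  rw [pow_two, PowerSeries.coeff_mul, Finset.Nat.sum_antidiagonal_eq_sum_range_succ_mk]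
  simp [Finset.sum_range_succ]
  ring

theorem coeff_X2mul_small (f2 : PowerSeries ℂ) {m : ℕ} (hm : m < 2) :
    PowerSeries.coeff m (PowerSeries.X^2 * f2) = 0 := by
  rw [mul_comm, PowerSeries.coeff_mul_X_pow', if_neg (by omega)]

theorem coeff_Xmul_zero (g1 : PowerSeries ℂ) :
    PowerSeries.coeff 0 (PowerSeries.X * g1) = 0 := by
  rw [show (PowerSeries.X : PowerSeries ℂ) = PowerSeries.X^1 by ring, mul_comm,
    PowerSeries.coeff_mul_X_pow', if_neg (by omega)]

theorem coeff1_smallC (c : ℂ) (u : PowerSeries ℂ) (h : PowerSeries.coeff 1 u = 0) :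
    PowerSeries.coeff 1 (PowerSeries.C c * u) = 0 := by
  rw [PowerSeries.coeff_C_mul, h, mul_zero]

theorem numeral_ne_zero (k : ℕ) [k.AtLeastTwo] (hk : (OfNat.ofNat k : ℂ) ≠ 0) :
    (OfNat.ofNat k : PowerSeries ℂ) ≠ 0 := by
  intro h
  have := congrArg (PowerSeries.constantCoeff) h
  rw [map_ofNat, map_zero] at this
  exact hk this

set_option maxHeartbeats 1000000 in
theorem univ_setup : ∃ r f2 g1 : PowerSeries ℂ,
    (PowerSeries.X:PowerSeries ℂ)^3*f2^2 - PowerSeries.X*f2 + 1 - r = 0 ∧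
    PowerSeries.X*g1^2 - g1 + 1 + r = 0 ∧
    r^2 = 1 - 4*PowerSeries.X ∧
    f2*g1*(1-PowerSeries.X^2*f2)*(1-PowerSeries.X*g1) = 4 ∧
    PowerSeries.coeff 0 g1 = 2 ∧
    (PowerSeries.X^2*f2)^2 - PowerSeries.X^2*f2 + PowerSeries.X - PowerSeries.X*r = 0 := by
  have h2C : (2 : PowerSeries ℂ) = PowerSeries.C 2 := (map_ofNat _ 2).symm
  have h4C : (4 : PowerSeries ℂ) = PowerSeries.C 4 := (map_ofNat _ 4).symm
  have hhalf : (2 : PowerSeries ℂ) * PowerSeries.C (1/2) = 1 := by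
    rw [h2C, ← map_mul]; norm_num
  have h4ne : (4 : PowerSeries ℂ) ≠ 0 := numeral_ne_zero 4 (by norm_num)
  have h16ne : (16 : PowerSeries ℂ) ≠ 0 := numeral_ne_zero 16 (by norm_num)
  have hXne : (PowerSeries.X : PowerSeries ℂ) ≠ 0 := PowerSeries.X_ne_zero
  -- r
  obtain ⟨hr2, hr0⟩ := sq_spec (1 - 4*PowerSeries.X) (by simp)
  set r : PowerSeries ℂ := PowerSeries.mk (sq (1 - 4*PowerSeries.X)) with hrdef
  clear_value r
  have hr0' : PowerSeries.constantCoeff r = 1 := by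
    rw [← PowerSeries.coeff_zero_eq_constantCoeff_apply]; exact hr0
  have hr1 : PowerSeries.coeff 1 r = -2 := by
    have h := congrArg (PowerSeries.coeff 1) hr2
    rw [coeff_one_sq, hr0, map_sub, PowerSeries.coeff_one, if_neg one_ne_zero, h4C,
      PowerSeries.coeff_C_mul, PowerSeries.coeff_X, if_pos rfl] at h
    linear_combination h/2
  -- q
  obtain ⟨hq2, hq0⟩ := sq_spec (1 - 4*PowerSeries.X + 4*(PowerSeries.X*r))
    (by simp)
  set q : PowerSeries ℂ := PowerSeries.mk (sq (1 - 4*PowerSeries.X + 4*(PowerSeries.X*r)))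
    with hqdef
  clear_value q
  have hq0' : PowerSeries.constantCoeff q = 1 := by
    rw [← PowerSeries.coeff_zero_eq_constantCoeff_apply]; exact hq0
  have hq1 : PowerSeries.coeff 1 q = 0 := by
    have h := congrArg (PowerSeries.coeff 1) hq2
    rw [coeff_one_sq, hq0, map_add, map_sub, PowerSeries.coeff_one, if_neg one_ne_zero, h4C,
      PowerSeries.coeff_C_mul, PowerSeries.coeff_C_mul, PowerSeries.coeff_X, if_pos rfl,
      PowerSeries.coeff_succ_X_mul, hr0] at h
    linear_combination h/2
  -- p
  obtain ⟨hp2, hp0⟩ := sq_spec (1 - 4*PowerSeries.X - 4*(PowerSeries.X*r))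
    (by simp)
  set p : PowerSeries ℂ := PowerSeries.mk (sq (1 - 4*PowerSeries.X - 4*(PowerSeries.X*r)))
    with hpdef
  clear_value p
  have hp0' : PowerSeries.constantCoeff p = 1 := by
    rw [← PowerSeries.coeff_zero_eq_constantCoeff_apply]; exact hp0
  have hp1 : PowerSeries.coeff 1 p = -4 := by
    have h := congrArg (PowerSeries.coeff 1) hp2
    rw [coeff_one_sq, hp0, map_sub, map_sub, PowerSeries.coeff_one, if_neg one_ne_zero, h4C,
      PowerSeries.coeff_C_mul, PowerSeries.coeff_C_mul, PowerSeries.coeff_X, if_pos rfl,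
      PowerSeries.coeff_succ_X_mul, hr0] at h
    linear_combination h/2
  -- divisibility
  obtain ⟨w, hw⟩ : (PowerSeries.X^2 : PowerSeries ℂ) ∣ (1 - q) := by
    rw [PowerSeries.X_pow_dvd_iff]
    intro m hm
    interval_cases m
    · rw [map_sub, PowerSeries.coeff_one, if_pos rfl, hq0]; ring
    · rw [map_sub, hq1, PowerSeries.coeff_one, if_neg one_ne_zero]; ring
  obtain ⟨w', hw'⟩ : (PowerSeries.X : PowerSeries ℂ) ∣ (1 - p) := by
    rw [PowerSeries.X_dvd_iff, map_sub, map_one, hp0']; ring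
  set f2 : PowerSeries ℂ := PowerSeries.C (1/2) * w with hf2def
  set g1 : PowerSeries ℂ := PowerSeries.C (1/2) * w' with hg1def
  have hd : (2 : PowerSeries ℂ)*(PowerSeries.X^2*f2) = 1 - q := by
    calc (2 : PowerSeries ℂ)*(PowerSeries.X^2*f2)
        = ((2 : PowerSeries ℂ) * PowerSeries.C (1/2))*(PowerSeries.X^2*w) := by
          rw [hf2def]; ring
    _ = PowerSeries.X^2*w := by rw [hhalf, one_mul]
    _ = 1 - q := hw.symm
  have hdg : (2 : PowerSeries ℂ)*(PowerSeries.X*g1) = 1 - p := by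
    calc (2 : PowerSeries ℂ)*(PowerSeries.X*g1)
        = ((2 : PowerSeries ℂ) * PowerSeries.C (1/2))*(PowerSeries.X*w') := by
          rw [hg1def]; ring
    _ = PowerSeries.X*w' := by rw [hhalf, one_mul]
    _ = 1 - p := hw'.symm
  clear_value f2 g1
  clear hf2def hg1def hw hw'
  have hg1c : PowerSeries.coeff 0 g1 = 2 := by
    have h := congrArg (PowerSeries.coeff 1) hdg
    rw [h2C, PowerSeries.coeff_C_mul, PowerSeries.coeff_succ_X_mul, map_sub, hp1,
      PowerSeries.coeff_one, if_neg one_ne_zero] at h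
    linear_combination h/2
  -- main relations
  have hfq : (PowerSeries.X^2*f2)^2 - PowerSeries.X^2*f2 + PowerSeries.X
      - PowerSeries.X*r = 0 := by
    have h4 : (4 : PowerSeries ℂ) * ((PowerSeries.X^2*f2)^2 - PowerSeries.X^2*f2
        + PowerSeries.X - PowerSeries.X*r) = (4 : PowerSeries ℂ) * 0 := by
      rw [mul_zero]
      linear_combination (-1 - q + 2*(PowerSeries.X^2*f2)) * hd + hq2
    exact mul_left_cancel₀ h4ne h4
  have hgq : (PowerSeries.X*g1)^2 - PowerSeries.X*g1 + PowerSeries.X + PowerSeries.X*r = 0 := by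
    have h4 : (4 : PowerSeries ℂ) * ((PowerSeries.X*g1)^2 - PowerSeries.X*g1 + PowerSeries.X
        + PowerSeries.X*r) = (4 : PowerSeries ℂ) * 0 := by
      rw [mul_zero]
      linear_combination (-1 - p + 2*(PowerSeries.X*g1)) * hdg + hp2
    exact mul_left_cancel₀ h4ne h4
  have u1 : (PowerSeries.X:PowerSeries ℂ)^3*f2^2 - PowerSeries.X*f2 + 1 - r = 0 := by
    have h : (PowerSeries.X:PowerSeries ℂ) * (PowerSeries.X^3*f2^2 - PowerSeries.X*f2 + 1 - r)
        = PowerSeries.X * 0 := by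
      rw [mul_zero]; linear_combination hfq
    exact mul_left_cancel₀ hXne h
  have u2 : (PowerSeries.X:PowerSeries ℂ)*g1^2 - g1 + 1 + r = 0 := by
    have h : (PowerSeries.X:PowerSeries ℂ) * (PowerSeries.X*g1^2 - g1 + 1 + r)
        = PowerSeries.X * 0 := by
      rw [mul_zero]; linear_combination hgq
    exact mul_left_cancel₀ hXne h
  have u4 : f2*g1*(1-PowerSeries.X^2*f2)*(1-PowerSeries.X*g1) = 4 := by
    have h163 : (16 : PowerSeries ℂ)*PowerSeries.X^3 ≠ 0 :=
      mul_ne_zero h16ne (pow_ne_zero _ hXne)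
    have h : ((16 : PowerSeries ℂ)*PowerSeries.X^3)
          * (f2*g1*(1-PowerSeries.X^2*f2)*(1-PowerSeries.X*g1)) =
        ((16 : PowerSeries ℂ)*PowerSeries.X^3) * 4 := by
      linear_combination (4*(PowerSeries.X*g1) + 4*(PowerSeries.X*g1)*q
          - 4*(PowerSeries.X^2*g1^2) - 4*(PowerSeries.X^2*g1^2)*q
          - 8*(PowerSeries.X^3*f2*g1) + 8*(PowerSeries.X^4*f2*g1^2)) * hd
        + (1 + p - q^2 - q^2*p - 2*(PowerSeries.X*g1) + 2*(PowerSeries.X*g1)*q^2) * hdg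
        + (-1 + p^2) * hq2 + (-4*PowerSeries.X + 4*(PowerSeries.X*r)) * hp2
        + (-16*PowerSeries.X^2) * hr2
    exact mul_left_cancel₀ h163 h
  exact ⟨r, f2, g1, u1, u2, hr2, u4, hg1c, hfq⟩

theorem dg_sub (u v : MvPowerSeries (Fin 2) ℂ) : dg (u - v) = dg u - dg v := by
  ext n; rw [map_sub, coeff_dg, coeff_dg, coeff_dg, map_sub]

theorem dg_add (u v : MvPowerSeries (Fin 2) ℂ) : dg (u + v) = dg u + dg v := by
  ext n; rw [map_add, coeff_dg, coeff_dg, coeff_dg, map_add]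

theorem dg_one : dg (1 : MvPowerSeries (Fin 2) ℂ) = 1 := by
  rw [← Phi_one, dg_Phi]

theorem dg_two : dg (2 : MvPowerSeries (Fin 2) ℂ) = 2 := by
  rw [← map_ofNat PhiHom 2, PhiHom_apply, dg_Phi]

theorem PhiHom_X : PhiHom PowerSeries.X =
    (MvPowerSeries.X 0 : MvPowerSeries (Fin 2) ℂ) * MvPowerSeries.X 1 := Phi_X

end SupertreesAux

open MvPolynomial
open SupertreesAux

set_option maxHeartbeats 4000000 in
/-- The generating function `f` of supertrees, the power series root of
`P(y,x) = y⁴ - 2y³ + (1+2x)y² - 2xy + 4x³` with `f₀ = f₁ = 0`, has Maclaurin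
coefficients equal to the diagonal coefficients of the rational function `F = G/H`. -/
theorem supertrees_diagonal
    (G H : MvPolynomial (Fin 2) ℂ)
    (hG : G = 2 * X 0 * (X 1) ^ 2 *
      (2 * (X 1) ^ 5 * (X 0) ^ 2 - 3 * (X 1) ^ 3 * X 0 + X 1 + 2 * (X 1) ^ 2 * X 0 - 1))
    (hH : H = (X 1) ^ 5 * (X 0) ^ 2 - 2 * (X 1) ^ 3 * X 0 + X 1 + 2 * (X 1) ^ 2 * X 0
      - 2 + 4 * X 0)
    (F : MvPowerSeries (Fin 2) ℂ)
    (hF : F = (G : MvPowerSeries (Fin 2) ℂ) * (H : MvPowerSeries (Fin 2) ℂ)⁻¹) :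
    ∃ f : PowerSeries ℂ,
      PowerSeries.coeff 0 f = 0 ∧
      PowerSeries.coeff 1 f = 0 ∧
      f ^ 4 - 2 * f ^ 3 + (1 + 2 * PowerSeries.X) * f ^ 2 - 2 * PowerSeries.X * f
        + 4 * PowerSeries.X ^ 3 = 0 ∧
      ∀ n : ℕ, PowerSeries.coeff n f =
        MvPowerSeries.coeff (Finsupp.equivFunOnFinite.symm ![n, n]) F := by
  classical
  obtain ⟨r, f2, g1, u1, u2, hr2, u4, hg1c, hfq⟩ := univ_setup
  refine ⟨PowerSeries.X^2 * f2, coeff_X2mul_small f2 (by omega),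
    coeff_X2mul_small f2 (by omega), ?_, ?_⟩
  · -- the quartic equation
    linear_combination ((PowerSeries.X^2*f2)^2 - PowerSeries.X^2*f2 + PowerSeries.X
      + PowerSeries.X*r) * hfq + PowerSeries.X^2 * hr2
  -- now the diagonal identity
  -- coercions of G and H
  have hHM : ((H : MvPolynomial (Fin 2) ℂ) : MvPowerSeries (Fin 2) ℂ) =
      (MvPowerSeries.X 1 : MvPowerSeries (Fin 2) ℂ)^5*(MvPowerSeries.X 0 : MvPowerSeries (Fin 2) ℂ)^2 - 2*(MvPowerSeries.X 1 : MvPowerSeries (Fin 2) ℂ)^3*(MvPowerSeries.X 0 : MvPowerSeries (Fin 2) ℂ) + (MvPowerSeries.X 1 : MvPowerSeries (Fin 2) ℂ) + 2*(MvPowerSeries.X 1 : MvPowerSeries (Fin 2) ℂ)^2*(MvPowerSeries.X 0 : MvPowerSeries (Fin 2) ℂ) - 2 + 4*(MvPowerSeries.X 0 : MvPowerSeries (Fin 2) ℂ) := by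
    rw [hH, ← MvPolynomial.coeToMvPowerSeries.ringHom_apply]
    simp only [map_sub, map_add, map_mul, map_pow, map_ofNat, map_one,
      MvPolynomial.coeToMvPowerSeries.ringHom_apply, MvPolynomial.coe_X]
  have hGM : ((G : MvPolynomial (Fin 2) ℂ) : MvPowerSeries (Fin 2) ℂ) =
      2*(MvPowerSeries.X 0 : MvPowerSeries (Fin 2) ℂ)*(MvPowerSeries.X 1 : MvPowerSeries (Fin 2) ℂ)^2 * (2*(MvPowerSeries.X 1 : MvPowerSeries (Fin 2) ℂ)^5*(MvPowerSeries.X 0 : MvPowerSeries (Fin 2) ℂ)^2 - 3*(MvPowerSeries.X 1 : MvPowerSeries (Fin 2) ℂ)^3*(MvPowerSeries.X 0 : MvPowerSeries (Fin 2) ℂ) + (MvPowerSeries.X 1 : MvPowerSeries (Fin 2) ℂ) + 2*(MvPowerSeries.X 1 : MvPowerSeries (Fin 2) ℂ)^2*(MvPowerSeries.X 0 : MvPowerSeries (Fin 2) ℂ) - 1) := by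
    rw [hG, ← MvPolynomial.coeToMvPowerSeries.ringHom_apply]
    simp only [map_sub, map_add, map_mul, map_pow, map_ofNat, map_one,
      MvPolynomial.coeToMvPowerSeries.ringHom_apply, MvPolynomial.coe_X]
  -- mapped relations
  have hm1 : (MvPowerSeries.X 0 : MvPowerSeries (Fin 2) ℂ)^3*(MvPowerSeries.X 1 : MvPowerSeries (Fin 2) ℂ)^3*(Phi f2)^2 - (MvPowerSeries.X 0 : MvPowerSeries (Fin 2) ℂ)*(MvPowerSeries.X 1 : MvPowerSeries (Fin 2) ℂ)*(Phi f2) + 1 - Phi r = 0 := by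
    have h := congrArg PhiHom u1
    simp only [map_sub, map_add, map_mul, map_pow, map_one, map_zero, PhiHom_apply,
      Phi_X] at h
    linear_combination h
  have hm2 : (MvPowerSeries.X 0 : MvPowerSeries (Fin 2) ℂ)*(MvPowerSeries.X 1 : MvPowerSeries (Fin 2) ℂ)*(Phi g1)^2 - Phi g1 + 1 + Phi r = 0 := by
    have h := congrArg PhiHom u2
    simp only [map_sub, map_add, map_mul, map_pow, map_one, map_zero, PhiHom_apply,
      Phi_X] at h
    linear_combination h
  have hm3 : (Phi r)^2 = 1 - 4*((MvPowerSeries.X 0 : MvPowerSeries (Fin 2) ℂ)*(MvPowerSeries.X 1 : MvPowerSeries (Fin 2) ℂ)) := by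
    have h := congrArg PhiHom hr2
    simp only [map_sub, map_mul, map_pow, map_one, map_ofNat, PhiHom_apply, Phi_X] at h
    linear_combination h
  have hm4 : Phi f2 * Phi g1 * (1 - (MvPowerSeries.X 0 : MvPowerSeries (Fin 2) ℂ)^2*(MvPowerSeries.X 1 : MvPowerSeries (Fin 2) ℂ)^2*(Phi f2)) * (1 - (MvPowerSeries.X 0 : MvPowerSeries (Fin 2) ℂ)*(MvPowerSeries.X 1 : MvPowerSeries (Fin 2) ℂ)*(Phi g1)) = 4 := by
    have h := congrArg PhiHom u4
    simp only [map_sub, map_mul, map_pow, map_one, map_ofNat, PhiHom_apply, Phi_X] at h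
    linear_combination h
  -- the factors
  set E1 : MvPowerSeries (Fin 2) ℂ := 1 - (MvPowerSeries.X 0 : MvPowerSeries (Fin 2) ℂ) * Phi f2 with hE1def
  set E2 : MvPowerSeries (Fin 2) ℂ := (MvPowerSeries.X 0 : MvPowerSeries (Fin 2) ℂ)*(MvPowerSeries.X 1 : MvPowerSeries (Fin 2) ℂ)^2 - 1 + (MvPowerSeries.X 0 : MvPowerSeries (Fin 2) ℂ)^2*(MvPowerSeries.X 1 : MvPowerSeries (Fin 2) ℂ)^2*(Phi f2) with hE2def
  set E3 : MvPowerSeries (Fin 2) ℂ := (MvPowerSeries.X 1 : MvPowerSeries (Fin 2) ℂ) - Phi g1 with hE3def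
  set E4 : MvPowerSeries (Fin 2) ℂ := (MvPowerSeries.X 0 : MvPowerSeries (Fin 2) ℂ)*(MvPowerSeries.X 1 : MvPowerSeries (Fin 2) ℂ)^2 - 1 + (MvPowerSeries.X 0 : MvPowerSeries (Fin 2) ℂ)*(MvPowerSeries.X 1 : MvPowerSeries (Fin 2) ℂ)*(Phi g1) with hE4def
  set P1 : MvPowerSeries (Fin 2) ℂ := (MvPowerSeries.X 0 : MvPowerSeries (Fin 2) ℂ)*(MvPowerSeries.X 1 : MvPowerSeries (Fin 2) ℂ)*(Phi f2) - 1 + Phi r with hP1def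
  set P2 : MvPowerSeries (Fin 2) ℂ := Phi g1 - 1 - Phi r with hP2def
  set P3 : MvPowerSeries (Fin 2) ℂ := (1 - (MvPowerSeries.X 0 : MvPowerSeries (Fin 2) ℂ)^2*(MvPowerSeries.X 1 : MvPowerSeries (Fin 2) ℂ)^2*(Phi f2))^2 with hP3def
  set P4 : MvPowerSeries (Fin 2) ℂ := (1 - (MvPowerSeries.X 0 : MvPowerSeries (Fin 2) ℂ)*(MvPowerSeries.X 1 : MvPowerSeries (Fin 2) ℂ)*(Phi g1))^2 with hP4def
  -- the two master identities
  have hC1 : ((H : MvPolynomial (Fin 2) ℂ) : MvPowerSeries (Fin 2) ℂ) = E1*E2*E3*E4 := by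
    rw [hHM, hE1def, hE2def, hE3def, hE4def]
    linear_combination ((MvPowerSeries.X 0 : MvPowerSeries (Fin 2) ℂ)*(MvPowerSeries.X 1 : MvPowerSeries (Fin 2) ℂ)^2 - 1)*hm1 + ((MvPowerSeries.X 0 : MvPowerSeries (Fin 2) ℂ)*(MvPowerSeries.X 1 : MvPowerSeries (Fin 2) ℂ)^2 - 1)*hm2 - (MvPowerSeries.X 0 : MvPowerSeries (Fin 2) ℂ)*hm4
  have hC2 : (MvPowerSeries.X 1 : MvPowerSeries (Fin 2) ℂ)*((G : MvPolynomial (Fin 2) ℂ) : MvPowerSeries (Fin 2) ℂ) =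
      (4*((MvPowerSeries.X 0 : MvPowerSeries (Fin 2) ℂ)*(MvPowerSeries.X 1 : MvPowerSeries (Fin 2) ℂ)^3) + 2*(MvPowerSeries.X 1 : MvPowerSeries (Fin 2) ℂ))*(E1*E2*E3*E4) + P1*(E2*E3*E4)
      + (MvPowerSeries.X 1 : MvPowerSeries (Fin 2) ℂ)*(P2*(E1*E2*E4)) + (MvPowerSeries.X 1 : MvPowerSeries (Fin 2) ℂ)*(P3*(E1*E3*E4)) + (MvPowerSeries.X 1 : MvPowerSeries (Fin 2) ℂ)*(P4*(E1*E2*E3)) := by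
    rw [hGM, hE1def, hE2def, hE3def, hE4def, hP1def, hP2def, hP3def, hP4def]
    linear_combination
      (1 + Phi r + (MvPowerSeries.X 1 : MvPowerSeries (Fin 2) ℂ) - (MvPowerSeries.X 0 : MvPowerSeries (Fin 2) ℂ)*(MvPowerSeries.X 1 : MvPowerSeries (Fin 2) ℂ)*(Phi g1) - (MvPowerSeries.X 0 : MvPowerSeries (Fin 2) ℂ)*(MvPowerSeries.X 1 : MvPowerSeries (Fin 2) ℂ)*(Phi g1)*(Phi r) - (MvPowerSeries.X 0 : MvPowerSeries (Fin 2) ℂ)*(MvPowerSeries.X 1 : MvPowerSeries (Fin 2) ℂ)^2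
        - (MvPowerSeries.X 0 : MvPowerSeries (Fin 2) ℂ)*(MvPowerSeries.X 1 : MvPowerSeries (Fin 2) ℂ)^2*(Phi r) - 3*(MvPowerSeries.X 0 : MvPowerSeries (Fin 2) ℂ)*(MvPowerSeries.X 1 : MvPowerSeries (Fin 2) ℂ)^3 - (MvPowerSeries.X 0 : MvPowerSeries (Fin 2) ℂ)^2*(MvPowerSeries.X 1 : MvPowerSeries (Fin 2) ℂ)^3*(Phi f2) + 3*(MvPowerSeries.X 0 : MvPowerSeries (Fin 2) ℂ)^2*(MvPowerSeries.X 1 : MvPowerSeries (Fin 2) ℂ)^5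
        + (MvPowerSeries.X 0 : MvPowerSeries (Fin 2) ℂ)^3*(MvPowerSeries.X 1 : MvPowerSeries (Fin 2) ℂ)^5*(Phi f2)) * hm1
      + (1 - Phi r + (MvPowerSeries.X 1 : MvPowerSeries (Fin 2) ℂ) - (MvPowerSeries.X 0 : MvPowerSeries (Fin 2) ℂ)*(MvPowerSeries.X 1 : MvPowerSeries (Fin 2) ℂ)^2 + (MvPowerSeries.X 0 : MvPowerSeries (Fin 2) ℂ)*(MvPowerSeries.X 1 : MvPowerSeries (Fin 2) ℂ)^2*(Phi r) - (MvPowerSeries.X 0 : MvPowerSeries (Fin 2) ℂ)*(MvPowerSeries.X 1 : MvPowerSeries (Fin 2) ℂ)^2*(Phi g1)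
        - 3*(MvPowerSeries.X 0 : MvPowerSeries (Fin 2) ℂ)*(MvPowerSeries.X 1 : MvPowerSeries (Fin 2) ℂ)^3 - (MvPowerSeries.X 0 : MvPowerSeries (Fin 2) ℂ)^2*(MvPowerSeries.X 1 : MvPowerSeries (Fin 2) ℂ)^2*(Phi f2) + (MvPowerSeries.X 0 : MvPowerSeries (Fin 2) ℂ)^2*(MvPowerSeries.X 1 : MvPowerSeries (Fin 2) ℂ)^2*(Phi f2)*(Phi r)
        + (MvPowerSeries.X 0 : MvPowerSeries (Fin 2) ℂ)^2*(MvPowerSeries.X 1 : MvPowerSeries (Fin 2) ℂ)^4*(Phi g1) + 3*(MvPowerSeries.X 0 : MvPowerSeries (Fin 2) ℂ)^2*(MvPowerSeries.X 1 : MvPowerSeries (Fin 2) ℂ)^5) * hm2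
      + (2 - (MvPowerSeries.X 0 : MvPowerSeries (Fin 2) ℂ)*(MvPowerSeries.X 1 : MvPowerSeries (Fin 2) ℂ)*(Phi g1) - 2*(MvPowerSeries.X 0 : MvPowerSeries (Fin 2) ℂ)*(MvPowerSeries.X 1 : MvPowerSeries (Fin 2) ℂ)^2 - (MvPowerSeries.X 0 : MvPowerSeries (Fin 2) ℂ)^2*(MvPowerSeries.X 1 : MvPowerSeries (Fin 2) ℂ)^2*(Phi f2)) * hm3
      + (2*(MvPowerSeries.X 0 : MvPowerSeries (Fin 2) ℂ)*(MvPowerSeries.X 1 : MvPowerSeries (Fin 2) ℂ) - (MvPowerSeries.X 0 : MvPowerSeries (Fin 2) ℂ)^2*(MvPowerSeries.X 1 : MvPowerSeries (Fin 2) ℂ)^2*(Phi g1) - 2*(MvPowerSeries.X 0 : MvPowerSeries (Fin 2) ℂ)^2*(MvPowerSeries.X 1 : MvPowerSeries (Fin 2) ℂ)^3 - (MvPowerSeries.X 0 : MvPowerSeries (Fin 2) ℂ)^3*(MvPowerSeries.X 1 : MvPowerSeries (Fin 2) ℂ)^3*(Phi f2)) * hm4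
  -- constant coefficients and units
  have hcE1 : MvPowerSeries.constantCoeff E1 = 1 := by
    rw [hE1def]
    simp [constantCoeff_Phi]
  have hcE2 : MvPowerSeries.constantCoeff E2 = -1 := by
    rw [hE2def]
    simp [constantCoeff_Phi]
  have hcE3 : MvPowerSeries.constantCoeff E3 = -2 := by
    rw [hE3def]
    simp [constantCoeff_Phi, hg1c]
  have hcE4 : MvPowerSeries.constantCoeff E4 = -1 := by
    rw [hE4def]
    simp [constantCoeff_Phi]
  have hE1u : E1 * E1⁻¹ = 1 := MvPowerSeries.mul_inv_cancel _ (by rw [hcE1]; norm_num)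
  have hE2u : E2 * E2⁻¹ = 1 := MvPowerSeries.mul_inv_cancel _ (by rw [hcE2]; norm_num)
  have hE3u : E3 * E3⁻¹ = 1 := MvPowerSeries.mul_inv_cancel _ (by rw [hcE3]; norm_num)
  have hE4u : E4 * E4⁻¹ = 1 := MvPowerSeries.mul_inv_cancel _ (by rw [hcE4]; norm_num)
  have hHne : ((H : MvPolynomial (Fin 2) ℂ) : MvPowerSeries (Fin 2) ℂ) ≠ 0 := by
    intro h0
    have hcH := congrArg (MvPowerSeries.constantCoeff) hC1
    rw [h0] at hcH
    rw [map_mul, map_mul, map_mul, hcE1, hcE2, hcE3, hcE4, map_zero] at hcH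
    norm_num at hcH
  have hFH : F * ((H : MvPolynomial (Fin 2) ℂ) : MvPowerSeries (Fin 2) ℂ) =
      ((G : MvPolynomial (Fin 2) ℂ) : MvPowerSeries (Fin 2) ℂ) := by
    rw [hF, mul_assoc, show ((H : MvPolynomial (Fin 2) ℂ) : MvPowerSeries (Fin 2) ℂ)⁻¹ *
      ((H : MvPolynomial (Fin 2) ℂ) : MvPowerSeries (Fin 2) ℂ) = 1 from by
        rw [mul_comm]
        exact MvPowerSeries.mul_inv_cancel _ (by
          intro hc
          exact hHne (by
            have := congrArg (MvPowerSeries.constantCoeff) hC1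
            rw [map_mul, map_mul, map_mul, hcE1, hcE2, hcE3, hcE4] at this
            rw [hc] at this
            norm_num at this)), mul_one]
  -- the V's and W
  set V1 : MvPowerSeries (Fin 2) ℂ := P1 * E1⁻¹ with hV1def
  set V2 : MvPowerSeries (Fin 2) ℂ := P2 * E3⁻¹ with hV2def
  set V3 : MvPowerSeries (Fin 2) ℂ := P3 * E2⁻¹ with hV3def
  set V4 : MvPowerSeries (Fin 2) ℂ := P4 * E4⁻¹ with hV4def
  set W : MvPowerSeries (Fin 2) ℂ := 2 + V2 + V3 + V4 with hWdef
  have key : (MvPowerSeries.X 1 : MvPowerSeries (Fin 2) ℂ) * F = 4*((MvPowerSeries.X 0 : MvPowerSeries (Fin 2) ℂ)*(MvPowerSeries.X 1 : MvPowerSeries (Fin 2) ℂ)^3) + V1 + (MvPowerSeries.X 1 : MvPowerSeries (Fin 2) ℂ)*W := by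
    apply mul_right_cancel₀ hHne
    calc ((MvPowerSeries.X 1 : MvPowerSeries (Fin 2) ℂ) * F) * ((H : MvPolynomial (Fin 2) ℂ) : MvPowerSeries (Fin 2) ℂ)
        = (MvPowerSeries.X 1 : MvPowerSeries (Fin 2) ℂ) * (F * ((H : MvPolynomial (Fin 2) ℂ) : MvPowerSeries (Fin 2) ℂ)) := by ring
      _ = (MvPowerSeries.X 1 : MvPowerSeries (Fin 2) ℂ)*((G : MvPolynomial (Fin 2) ℂ) : MvPowerSeries (Fin 2) ℂ) := by rw [hFH]
      _ = (4*((MvPowerSeries.X 0 : MvPowerSeries (Fin 2) ℂ)*(MvPowerSeries.X 1 : MvPowerSeries (Fin 2) ℂ)^3) + 2*(MvPowerSeries.X 1 : MvPowerSeries (Fin 2) ℂ))*(E1*E2*E3*E4) + P1*(E2*E3*E4)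
          + (MvPowerSeries.X 1 : MvPowerSeries (Fin 2) ℂ)*(P2*(E1*E2*E4)) + (MvPowerSeries.X 1 : MvPowerSeries (Fin 2) ℂ)*(P3*(E1*E3*E4)) + (MvPowerSeries.X 1 : MvPowerSeries (Fin 2) ℂ)*(P4*(E1*E2*E3)) := hC2
      _ = (4*((MvPowerSeries.X 0 : MvPowerSeries (Fin 2) ℂ)*(MvPowerSeries.X 1 : MvPowerSeries (Fin 2) ℂ)^3) + V1 + (MvPowerSeries.X 1 : MvPowerSeries (Fin 2) ℂ)*W) *
          ((H : MvPolynomial (Fin 2) ℂ) : MvPowerSeries (Fin 2) ℂ) := by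
        rw [hC1, hWdef, hV1def, hV2def, hV3def, hV4def]
        linear_combination (-(P1*(E2*E3*E4)))*hE1u + (-((MvPowerSeries.X 1 : MvPowerSeries (Fin 2) ℂ)*(P2*(E1*E2*E4))))*hE3u
          + (-((MvPowerSeries.X 1 : MvPowerSeries (Fin 2) ℂ)*(P3*(E1*E3*E4))))*hE2u + (-((MvPowerSeries.X 1 : MvPowerSeries (Fin 2) ℂ)*(P4*(E1*E2*E3))))*hE4u
  -- support facts
  have hE1low : lowT E1 := by
    rw [hE1def]; exact lowT_sub lowT_one (lowT_mul lowT_X0 (Phi_lowT _))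
  have hP1' : P1 = Phi (PowerSeries.X*f2 - 1 + r) := by
    rw [hP1def]
    simp only [← PhiHom_apply, map_add, map_sub, map_mul, map_one, PhiHom_X]
  have hP1low : lowT P1 := by rw [hP1']; exact Phi_lowT _
  have hE3up : upT E3 := by rw [hE3def]; exact upT_sub upT_X1 (Phi_upT _)
  have hE2' : E2 = ((MvPowerSeries.X 0 : MvPowerSeries (Fin 2) ℂ)*(MvPowerSeries.X 1 : MvPowerSeries (Fin 2) ℂ)^2 - 1) + Phi (PowerSeries.X^2*f2) := by
    rw [hE2def]
    simp only [← PhiHom_apply, map_mul, map_pow, PhiHom_X]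
    ring
  have hE4' : E4 = ((MvPowerSeries.X 0 : MvPowerSeries (Fin 2) ℂ)*(MvPowerSeries.X 1 : MvPowerSeries (Fin 2) ℂ)^2 - 1) + Phi (PowerSeries.X*g1) := by
    rw [hE4def]
    simp only [← PhiHom_apply, map_mul, PhiHom_X]
  have hE2up : upT E2 := by
    rw [hE2']; exact upT_add (upT_sub upT_X0X1sq upT_one) (Phi_upT _)
  have hE4up : upT E4 := by
    rw [hE4']; exact upT_add (upT_sub upT_X0X1sq upT_one) (Phi_upT _)
  -- diagonal values
  have hdgE3 : dg E3 = -g1 := by rw [hE3def, dg_sub, dg_X1, dg_Phi, zero_sub]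
  have hdgE2 : dg E2 = PowerSeries.X^2*f2 - 1 := by
    rw [hE2', dg_add, dg_sub, dg_X0X1sq, dg_one, dg_Phi]; ring
  have hdgE4 : dg E4 = PowerSeries.X*g1 - 1 := by
    rw [hE4', dg_add, dg_sub, dg_X0X1sq, dg_one, dg_Phi]; ring
  have hg1ne : g1 ≠ 0 := by
    intro h; rw [h, map_zero] at hg1c; norm_num at hg1c
  have hdgV2 : dg V2 = -(PowerSeries.X * g1) := by
    have hP2' : P2 = Phi (g1 - 1 - r) := by
      rw [hP2def]
      simp only [← PhiHom_apply, map_sub, map_one]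
    have hP2up : upT P2 := by rw [hP2']; exact Phi_upT _
    have hV2up : upT V2 := by rw [hV2def]; exact upT_mul hP2up (upT_inv hE3up)
    have hprod : V2 * E3 = P2 := by rw [hV2def]; linear_combination P2 * hE3u
    have hmul := dg_mul hV2up hE3up
    rw [hprod, hP2', dg_Phi, hdgE3] at hmul
    refine mul_right_cancel₀ (neg_ne_zero.mpr hg1ne) ?_
    rw [← hmul]
    linear_combination -u2
  have hdgV3 : dg V3 = PowerSeries.X^2*f2 - 1 := by
    have hP3' : P3 = Phi ((1 - PowerSeries.X^2*f2)^2) := by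
      rw [hP3def]
      simp only [← PhiHom_apply, map_pow, map_sub, map_mul, map_one, PhiHom_X]
      ring
    have hV3up : upT V3 := by
      rw [hV3def, hP3']; exact upT_mul (Phi_upT _) (upT_inv hE2up)
    have hprod : V3 * E2 = P3 := by rw [hV3def]; linear_combination P3 * hE2u
    have hmul := dg_mul hV3up hE2up
    rw [hprod, hP3', dg_Phi, hdgE2] at hmul
    have hne : (PowerSeries.X^2*f2 - 1 : PowerSeries ℂ) ≠ 0 := by
      intro h
      have := congrArg (PowerSeries.coeff 0) h
      rw [map_sub, coeff_X2mul_small f2 (by omega), PowerSeries.coeff_one, if_pos rfl,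
        map_zero] at this
      norm_num at this
    refine mul_right_cancel₀ hne ?_
    rw [← hmul]
    ring
  have hdgV4 : dg V4 = PowerSeries.X*g1 - 1 := by
    have hP4' : P4 = Phi ((1 - PowerSeries.X*g1)^2) := by
      rw [hP4def]
      simp only [← PhiHom_apply, map_pow, map_sub, map_mul, map_one, PhiHom_X]
    have hV4up : upT V4 := by
      rw [hV4def, hP4']; exact upT_mul (Phi_upT _) (upT_inv hE4up)
    have hprod : V4 * E4 = P4 := by rw [hV4def]; linear_combination P4 * hE4u
    have hmul := dg_mul hV4up hE4up
    rw [hprod, hP4', dg_Phi, hdgE4] at hmul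
    have hne : (PowerSeries.X*g1 - 1 : PowerSeries ℂ) ≠ 0 := by
      intro h
      have := congrArg (PowerSeries.coeff 0) h
      rw [map_sub, coeff_Xmul_zero g1, PowerSeries.coeff_one, if_pos rfl, map_zero] at this
      norm_num at this
    refine mul_right_cancel₀ hne ?_
    rw [← hmul]
    ring
  have hdgW : dg W = PowerSeries.X^2*f2 := by
    rw [hWdef, dg_add, dg_add, dg_add, dg_two, hdgV2, hdgV3, hdgV4]
    ring
  -- final extraction
  intro n
  have h := congrArg (MvPowerSeries.coeff (idx n (n+1))) key
  rw [coeff_X1_mul F n n, map_add, map_add, coeff_four_X0X1cube n,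
    coeff_X1_mul W n n] at h
  have hV1z : MvPowerSeries.coeff (idx n (n+1)) V1 = 0 := by
    rw [hV1def]
    exact lowT_mul hP1low (lowT_inv hE1low) n (n+1) (by omega)
  rw [hV1z] at h
  have hcoW : MvPowerSeries.coeff (idx n n) W = PowerSeries.coeff n
      (PowerSeries.X^2*f2) := by
    rw [← coeff_dg, hdgW]
  rw [hcoW] at h
  have h' : MvPowerSeries.coeff (idx n n) F
      = PowerSeries.coeff n (PowerSeries.X^2*f2) := by rw [h]; ring
  exact h'.symm
end

section
/- Let H(x₁,x₂) = x₂⁵x₁² − 2x₂³x₁ + x₂ + 2x₂²x₁ − 2 + 4x₁. The variety V = {x ∈ ℂ² : H(x) = 0} is globally smooth: for every x ∈ ℂ² with H(x) = 0, the gradient of H does not vanish at x, i.e., ∂₁H(x) ≠ 0 or ∂₂H(x) ≠ 0. -/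
open MvPolynomial

/-- The variety of `H(x₁,x₂) = x₂⁵x₁² - 2x₂³x₁ + x₂ + 2x₂²x₁ - 2 + 4x₁` (the denominator
from the supertrees example) is globally smooth: the gradient of `H` does not vanish at
any zero of `H`. -/
theorem supertrees_variety_smooth
    (H : MvPolynomial (Fin 2) ℂ)
    (hH : H = (X 1) ^ 5 * (X 0) ^ 2 - 2 * (X 1) ^ 3 * X 0 + X 1 + 2 * (X 1) ^ 2 * X 0
      - 2 + 4 * X 0) :
    ∀ x : Fin 2 → ℂ, eval x H = 0 →
      eval x (pderiv 0 H) ≠ 0 ∨ eval x (pderiv 1 H) ≠ 0 := by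
  have c2 : (2 : MvPolynomial (Fin 2) ℂ) = C 2 := (map_ofNat C 2).symm
  have c4 : (4 : MvPolynomial (Fin 2) ℂ) = C 4 := (map_ofNat C 4).symm
  have e0 : pderiv 0 H = C 2 * X 1 ^ 5 * X 0 - C 2 * X 1 ^ 3 + C 2 * X 1 ^ 2 + C 4 := by
    subst hH
    simp only [c2, c4, map_sub, map_add, pderiv_mul, pderiv_pow, pderiv_C,
      pderiv_X_self, pderiv_X_of_ne (show (1:Fin 2) ≠ 0 by decide)]
    simp only [← c2, ← c4]
    ring
  have e1 : pderiv 1 H = C 5 * X 1 ^ 4 * X 0 ^ 2 - C 6 * X 1 ^ 2 * X 0 + 1 + C 4 * X 1 * X 0 := by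
    subst hH
    simp only [c2, c4, map_sub, map_add, pderiv_mul, pderiv_pow, pderiv_C,
      pderiv_X_self, pderiv_X_of_ne (show (0:Fin 2) ≠ 1 by decide)]
    have c5 : (5 : MvPolynomial (Fin 2) ℂ) = C 5 := (map_ofNat C 5).symm
    have c6 : (6 : MvPolynomial (Fin 2) ℂ) = C 6 := (map_ofNat C 6).symm
    have c3 : (3 : MvPolynomial (Fin 2) ℂ) = C 3 := (map_ofNat C 3).symm
    simp only [← c2, ← c3, ← c4, ← c5, ← c6]
    ring
  intro x hx
  by_contra hc
  push_neg at hc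
  obtain ⟨h0, h1⟩ := hc
  rw [e0] at h0; rw [e1] at h1; rw [hH] at hx
  simp only [map_sub, map_add, map_mul, map_pow, map_ofNat, map_one, eval_X, eval_C] at hx h0 h1
  set a := x 0
  set b := x 1
  have key : (1 : ℂ) = 0 := by
    linear_combination (b^5*(10+5*b-7*b^2+b^3)/80) * hx
      + (-(1/160) * ((10+5*b-7*b^2+b^3)*(b^5*a + (b^3-b^2-2) - 2*b^3+2*b^2+4)
          + (6+b-3*b^2+b^3)*(5*b^5*a+5*(b^3-b^2-2)-6*b^3+4*b^2))) * h0
      + (b^6*(6+b-3*b^2+b^3)/80) * h1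
  exact one_ne_zero key
end

section
/- Let H(x₁,x₂) = x₂⁵x₁² − 2x₂³x₁ + x₂ + 2x₂²x₁ − 2 + 4x₁. The set of critical points of H for the direction α = (1,1), i.e., the set of x ∈ ℂ² satisfying H(x) = 0 and x₁·∂₁H(x) = x₂·∂₂H(x), is exactly the three-element set {(3/16 − (1/16)√5, 1 + √5), (3/16 + (1/16)√5, 1 − √5), (1/8, 2)}. -/
open MvPolynomial

lemma pd_two' (i : Fin 2) : (pderiv i) (2 : MvPolynomial (Fin 2) ℂ) = 0 := by
  rw [show (2:MvPolynomial (Fin 2) ℂ) = C 2 from (map_ofNat C 2).symm]; simp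

lemma pd_four' (i : Fin 2) : (pderiv i) (4 : MvPolynomial (Fin 2) ℂ) = 0 := by
  rw [show (4:MvPolynomial (Fin 2) ℂ) = C 4 from (map_ofNat C 4).symm]; simp

lemma vec2_eq_iff (x : Fin 2 → ℂ) (u v : ℂ) : x = ![u, v] ↔ x 0 = u ∧ x 1 = v := by
  constructor
  · intro h; rw [h]; exact ⟨rfl, rfl⟩
  · rintro ⟨h0, h1⟩; funext i; fin_cases i <;> simpa

lemma key_alg (a b s : ℂ) (hs : s ^ 2 = 5) :
    (b^5*a^2 - 2*b^3*a + b + 2*b^2*a - 2 + 4*a = 0 ∧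
      a * (2*b^5*a - 2*b^3 + 2*b^2 + 4) = b * (5*b^4*a^2 - 6*b^2*a + 1 + 4*b*a)) ↔
    ((a = 3/16 - 1/16*s ∧ b = 1 + s) ∨ (a = 3/16 + 1/16*s ∧ b = 1 - s) ∨
      (a = 1/8 ∧ b = 2)) := by
  constructor
  · rintro ⟨h1, h2⟩
    have hDa : (-b^3 + 2*b^2 + 8) * a = 3 - b := by
      linear_combination ((3:ℂ)/2) * h1 + (1/2 : ℂ) * h2
    have hkey : (b - 2)^3 * (b^2 - 2*b - 4) = 0 := by
      linear_combination (-(-b^3+2*b^2+8)^2) * h1 +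
        (b^5*((-b^3+2*b^2+8)*a + 3 - b) + (-2*b^3+2*b^2+4)*(-b^3+2*b^2+8)) * hDa
    rcases mul_eq_zero.mp hkey with h | h
    · have hb : b = 2 := by
        have h0 : b - 2 = 0 := by
          exact pow_eq_zero_iff (by norm_num : (3:ℕ) ≠ 0) |>.mp h
        linear_combination h0
      rw [hb] at hDa
      refine Or.inr (Or.inr ⟨?_, hb⟩)
      linear_combination (1/8 : ℂ) * hDa
    · have h2' : (b - 1 - s) * (b - 1 + s) = 0 := by linear_combination h - hs
      rcases mul_eq_zero.mp h2' with h3 | h3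
      · have hb : b = 1 + s := by linear_combination h3
        rw [hb] at hDa
        have hD4 : ((4:ℂ) - 4*s) * a = 2 - s := by
          linear_combination hDa + (1 + s) * a * hs
        have h4s : (4:ℂ) - 4*s ≠ 0 := by
          intro h0
          have hs1 : s = 1 := by linear_combination (-1/4 : ℂ) * h0
          rw [hs1] at hs; norm_num at hs
        have hz : ((4:ℂ) - 4*s) * (a - (3/16 - 1/16*s)) = 0 := by
          linear_combination hD4 - (1/4 : ℂ) * hs
        have ha := (mul_eq_zero.mp hz).resolve_left h4s
        exact Or.inl ⟨by linear_combination ha, hb⟩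
      · have hb : b = 1 - s := by linear_combination h3
        rw [hb] at hDa
        have hD4 : ((4:ℂ) + 4*s) * a = 2 + s := by
          linear_combination hDa + (1 - s) * a * hs
        have h4s : (4:ℂ) + 4*s ≠ 0 := by
          intro h0
          have hs1 : s = -1 := by linear_combination (1/4 : ℂ) * h0
          rw [hs1] at hs; norm_num at hs
        have hz : ((4:ℂ) + 4*s) * (a - (3/16 + 1/16*s)) = 0 := by
          linear_combination hD4 - (1/4 : ℂ) * hs
        have ha := (mul_eq_zero.mp hz).resolve_left h4s
        exact Or.inr (Or.inl ⟨by linear_combination ha, hb⟩)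
  · rintro (⟨ha, hb⟩ | ⟨ha, hb⟩ | ⟨ha, hb⟩) <;> subst ha <;> subst hb
    · constructor
      · linear_combination (11/256 - 27/256*s + 11/128*s^2 - 3/128*s^3 - 1/256*s^4
          + 1/256*s^5) * hs
      · linear_combination (-1/256 + 17/256*s - 17/128*s^2 + 9/128*s^3 + 3/256*s^4
          - 3/256*s^5) * hs
    · constructor
      · linear_combination (11/256 + 27/256*s + 11/128*s^2 + 3/128*s^3 - 1/256*s^4
          - 1/256*s^5) * hs
      · linear_combination (-1/256 - 17/256*s - 17/128*s^2 - 9/128*s^3 + 3/256*s^4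
          + 3/256*s^5) * hs
    · constructor <;> norm_num

/-- The critical points of `H(x₁,x₂) = x₂⁵x₁² - 2x₂³x₁ + x₂ + 2x₂²x₁ - 2 + 4x₁` for the
direction `α = (1,1)` are exactly `(3/16 - √5/16, 1 + √5)`, `(3/16 + √5/16, 1 - √5)`
and `(1/8, 2)`. -/
theorem supertrees_critical_points
    (H : MvPolynomial (Fin 2) ℂ)
    (hH : H = (X 1) ^ 5 * (X 0) ^ 2 - 2 * (X 1) ^ 3 * X 0 + X 1 + 2 * (X 1) ^ 2 * X 0
      - 2 + 4 * X 0) :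
    ∀ x : Fin 2 → ℂ,
      (eval x H = 0 ∧ x 0 * eval x (pderiv 0 H) = x 1 * eval x (pderiv 1 H)) ↔
        (x = ![3/16 - (1/16) * (Real.sqrt 5 : ℂ), 1 + (Real.sqrt 5 : ℂ)] ∨
         x = ![3/16 + (1/16) * (Real.sqrt 5 : ℂ), 1 - (Real.sqrt 5 : ℂ)] ∨
         x = ![1/8, 2]) := by
  subst hH
  intro x
  have hs : ((Real.sqrt 5 : ℝ) : ℂ) ^ 2 = 5 := by
    rw [← Complex.ofReal_pow, Real.sq_sqrt (by norm_num : (5:ℝ) ≥ 0)]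
    norm_num
  have e0 : eval x ((X 1 : MvPolynomial (Fin 2) ℂ) ^ 5 * (X 0) ^ 2 - 2 * (X 1) ^ 3 * X 0
      + X 1 + 2 * (X 1) ^ 2 * X 0 - 2 + 4 * X 0)
      = (x 1)^5*(x 0)^2 - 2*(x 1)^3*(x 0) + x 1 + 2*(x 1)^2*(x 0) - 2 + 4*(x 0) := by
    simp
  have e1 : eval x (pderiv 0 ((X 1 : MvPolynomial (Fin 2) ℂ) ^ 5 * (X 0) ^ 2
      - 2 * (X 1) ^ 3 * X 0 + X 1 + 2 * (X 1) ^ 2 * X 0 - 2 + 4 * X 0))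
      = 2*(x 1)^5*(x 0) - 2*(x 1)^3 + 2*(x 1)^2 + 4 := by
    simp [pderiv_mul, pderiv_pow, pderiv_X_self, pderiv_X_of_ne, pd_two', pd_four']
    ring
  have e2 : eval x (pderiv 1 ((X 1 : MvPolynomial (Fin 2) ℂ) ^ 5 * (X 0) ^ 2
      - 2 * (X 1) ^ 3 * X 0 + X 1 + 2 * (X 1) ^ 2 * X 0 - 2 + 4 * X 0))
      = 5*(x 1)^4*(x 0)^2 - 6*(x 1)^2*(x 0) + 1 + 4*(x 1)*(x 0) := by
    simp [pderiv_mul, pderiv_pow, pderiv_X_self, pderiv_X_of_ne, pd_two', pd_four']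
    ring
  rw [e0, e1, e2, vec2_eq_iff, vec2_eq_iff, vec2_eq_iff]
  exact key_alg (x 0) (x 1) ((Real.sqrt 5 : ℝ) : ℂ) hs
end

section
/- Let H(x₁,x₂) = x₂⁵x₁² − 2x₂³x₁ + x₂ + 2x₂²x₁ − 2 + 4x₁. For each of the three points q ∈ {(3/16 − (1/16)√5, 1 + √5), (3/16 + (1/16)√5, 1 − √5), (1/8, 2)}, the point q is not minimal on the variety V = {x ∈ ℂ² : H(x) = 0}: there exists q' ∈ ℂ² with H(q') = 0, |q'₁| = |q₁|, and |q'₂| < |q₂|. -/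
open MvPolynomial

/-- IVT helper: the real quintic `a²t⁵ - 2at³ + 2at² + t + (4a-2)` has a root in `[0,c)`
provided it is negative at `0` and positive at `c`. -/
lemma quintic_root_aux (a c : ℝ) (hc : (0:ℝ) ≤ c)
    (h0 : 4 * a - 2 < 0)
    (hc2 : 0 < a^2 * c^5 - 2*a*c^3 + 2*a*c^2 + c + (4*a - 2)) :
    ∃ t : ℝ, 0 ≤ t ∧ t < c ∧
      a^2 * t^5 - 2*a*t^3 + 2*a*t^2 + t + (4*a - 2) = 0 := by
  set f : ℝ → ℝ := fun t => a^2 * t^5 - 2*a*t^3 + 2*a*t^2 + t + (4*a - 2) with hf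
  have hcont : ContinuousOn f (Set.Icc 0 c) := by
    apply Continuous.continuousOn; unfold f; continuity
  have h0' : f 0 ≤ 0 := by simp [hf]; linarith
  have hc' : (0:ℝ) ≤ f c := le_of_lt hc2
  have := intermediate_value_Icc hc hcont
  have hmem : (0:ℝ) ∈ Set.Icc (f 0) (f c) := ⟨h0', hc'⟩
  obtain ⟨t, ht, hft⟩ := this hmem
  refine ⟨t, ht.1, ?_, hft⟩
  rcases lt_or_eq_of_le ht.2 with h | h
  · exact h
  · exfalso; rw [h] at hft
    have hfc : 0 < f c := hc2
    linarith

/-- Casting helper: the complex evaluation identity from a real root. -/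
lemma complex_eval_of_real_root (a t : ℝ)
    (h : a^2 * t^5 - 2*a*t^3 + 2*a*t^2 + t + (4*a - 2) = 0) :
    (t:ℂ)^5 * (a:ℂ)^2 - 2*(t:ℂ)^3*(a:ℂ) + (t:ℂ) + 2*(t:ℂ)^2*(a:ℂ) - 2 + 4*(a:ℂ) = 0 := by
  have : ((a^2 * t^5 - 2*a*t^3 + 2*a*t^2 + t + (4*a - 2) : ℝ) : ℂ) = 0 := by
    rw [h]; norm_num
  push_cast at this
  linear_combination this

/-- None of the three critical points of `H(x₁,x₂) = x₂⁵x₁² - 2x₂³x₁ + x₂ + 2x₂²x₁ - 2 + 4x₁`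
for the direction `(1,1)` is minimal: each admits a witness `q'` on the variety with
`|q'₁| = |q₁|` and `|q'₂| < |q₂|`. -/
theorem supertrees_critical_points_not_minimal
    (H : MvPolynomial (Fin 2) ℂ)
    (hH : H = (X 1) ^ 5 * (X 0) ^ 2 - 2 * (X 1) ^ 3 * X 0 + X 1 + 2 * (X 1) ^ 2 * X 0
      - 2 + 4 * X 0) :
    ∀ q : Fin 2 → ℂ,
      (q = ![3/16 - (1/16) * (Real.sqrt 5 : ℂ), 1 + (Real.sqrt 5 : ℂ)] ∨
       q = ![3/16 + (1/16) * (Real.sqrt 5 : ℂ), 1 - (Real.sqrt 5 : ℂ)] ∨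
       q = ![1/8, 2]) →
      ∃ q' : Fin 2 → ℂ, eval q' H = 0 ∧
        ‖q' 0‖ = ‖q 0‖ ∧
        ‖q' 1‖ < ‖q 1‖ := by
  have s5 : Real.sqrt 5 ^ 2 = 5 := Real.sq_sqrt (by norm_num)
  have s5pos : (0:ℝ) < Real.sqrt 5 := Real.sqrt_pos.mpr (by norm_num)
  have s5lt : Real.sqrt 5 < 9/4 := by nlinarith
  have s5gt : 2 < Real.sqrt 5 := by nlinarith
  intro q hq
  -- choose (a, c) per case
  have key : ∀ a c : ℝ, (0:ℝ) ≤ c → 4*a - 2 < 0 →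
      0 < a^2 * c^5 - 2*a*c^3 + 2*a*c^2 + c + (4*a - 2) →
      (‖(a:ℂ)‖ = ‖q 0‖) →
      (c ≤ ‖q 1‖) →
      ∃ q' : Fin 2 → ℂ, eval q' H = 0 ∧
        ‖q' 0‖ = ‖q 0‖ ∧
        ‖q' 1‖ < ‖q 1‖ := by
    intro a c hc h0 hc2 habs hcle
    obtain ⟨t, ht0, htc, hroot⟩ := quintic_root_aux a c hc h0 hc2
    refine ⟨![(a:ℂ), (t:ℂ)], ?_, ?_, ?_⟩
    · subst hH
      simp only [map_sub, map_add, map_mul, map_pow, eval_X, eval_ofNat,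
        Matrix.cons_val_one, Matrix.head_cons, Matrix.cons_val_zero, map_ofNat]
      exact complex_eval_of_real_root a t hroot
    · simpa using habs
    · have : ‖(t:ℂ)‖ = t := by
        rw [Complex.norm_real, Real.norm_eq_abs, abs_of_nonneg ht0]
      simp only [Matrix.cons_val_one, Matrix.head_cons, Matrix.cons_val_zero]
      rw [this]
      exact lt_of_lt_of_le htc hcle
  rcases hq with hq | hq | hq <;> subst hq
  · -- q = (3/16 - √5/16, 1 + √5), take a = (3 - √5)/16, c = 3
    refine key ((3 - Real.sqrt 5)/16) 3 (by norm_num) (by nlinarith) (by nlinarith) ?_ ?_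
    · have : ((3:ℂ)/16 - (1/16) * (Real.sqrt 5 : ℂ)) = (((3 - Real.sqrt 5)/16 : ℝ) : ℂ) := by
        push_cast; ring
      simp only [Matrix.cons_val_zero]; rw [this]
    · have : ((1:ℂ) + (Real.sqrt 5 : ℂ)) = (((1 + Real.sqrt 5 : ℝ)) : ℂ) := by push_cast; ring
      simp only [Matrix.cons_val_one, Matrix.head_cons, Matrix.cons_val_zero, this, Complex.norm_real, Real.norm_eq_abs]
      rw [abs_of_nonneg (by positivity)]
      linarith
  · -- q = (3/16 + √5/16, 1 - √5), take a = (3 + √5)/16, c = 1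
    refine key ((3 + Real.sqrt 5)/16) 1 (by norm_num) (by nlinarith) (by nlinarith) ?_ ?_
    · have : ((3:ℂ)/16 + (1/16) * (Real.sqrt 5 : ℂ)) = (((3 + Real.sqrt 5)/16 : ℝ) : ℂ) := by
        push_cast; ring
      simp only [Matrix.cons_val_zero]; rw [this]
    · have : ((1:ℂ) - (Real.sqrt 5 : ℂ)) = (((1 - Real.sqrt 5 : ℝ)) : ℂ) := by push_cast; ring
      simp only [Matrix.cons_val_one, Matrix.head_cons, Matrix.cons_val_zero, this, Complex.norm_real, Real.norm_eq_abs]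
      rw [abs_of_nonpos (by linarith)]
      linarith
  · -- q = (1/8, 2), take a = -1/8, c = 2
    refine key (-1/8) 2 (by norm_num) (by norm_num) (by norm_num) ?_ ?_
    · simp only [Matrix.cons_val_zero]
      rw [show ((1:ℂ)/8) = ((1/8 : ℝ) : ℂ) by norm_num]
      rw [Complex.norm_real, Complex.norm_real, Real.norm_eq_abs, Real.norm_eq_abs]
      norm_num
    · simp
end

section
/- Let F = G·H⁻¹ ∈ ℂ[[x₁,x₂]] where G = x₂x₁(−3x₂ + 3x₂²x₁ − 2 + 2x₂x₁ + x₁ − 2x₂² + 2x₂³x₁) and H = −x₂ + x₂²x₁ − 2 + 2x₂x₁ + x₁ (note H(0,0) = −2 ≠ 0). Then F_{(0,0)} = 0 and for every n ≥ 1, the diagonal coefficient F_{(n,n)} equals binom(2n−2, n−1)/4^{n−1}. Equivalently, the Maclaurin coefficients of the algebraic function f(x₁) = x₁/√(1 − x₁) satisfy f_n = F_{(n,n)} for all n ∈ ℕ. -/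
namespace BUDiag
open PowerSeries

noncomputable section

abbrev PS := PowerSeries ℂ

def rr : PS := 2 + PowerSeries.X

def qq : ℕ → PS
  | 0 => 0
  | 1 => X * (2*X^2 + 3*X + 2)
  | (a+2) => 2*X^2*(1+X)^(2*a+1)

def g (a : ℕ) : PS := (rr^a)⁻¹ * qq a

def Gsl : ℕ → PS
  | 1 => -(X * (2*X^2 + 3*X + 2))
  | 2 => X*(1+X)*(2*X^2+X+1)
  | _ => 0

lemma constCoeff_rr_pow (k : ℕ) : constantCoeff (rr^k) ≠ 0 := by
  rw [map_pow]
  have : constantCoeff rr = 2 := by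
    simp [rr, map_ofNat]
  simp [this]

lemma rr_pow_inv_cancel (k : ℕ) : rr^k * (rr^k)⁻¹ = 1 :=
  PowerSeries.mul_inv_cancel _ (constCoeff_rr_pow k)

lemma rr_pow_ne_zero (k : ℕ) : rr^k ≠ 0 := by
  intro h
  have := constCoeff_rr_pow k
  rw [h] at this; simp at this

lemma grec (a : ℕ) : rr * g (a+1) = (1+X)^2 * g a - Gsl (a+1) := by
  match a with
  | 0 =>
    show rr * ((rr^1)⁻¹ * qq 1) = (1+X)^2 * ((rr^0)⁻¹ * qq 0) - Gsl 1
    have h1 := rr_pow_inv_cancel 1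
    rw [pow_one] at h1 ⊢
    rw [← mul_assoc, h1, show qq 0 = 0 from rfl, show Gsl 1 = -(X * (2*X^2 + 3*X + 2)) from rfl,
      show qq 1 = X * (2*X^2 + 3*X + 2) from rfl]
    ring
  | 1 =>
    apply mul_left_cancel₀ (rr_pow_ne_zero 2)
    show rr^2 * (rr * ((rr^2)⁻¹ * qq 2)) = rr^2 * ((1+X)^2 * ((rr^1)⁻¹ * qq 1) - Gsl 2)
    have h2 := rr_pow_inv_cancel 2
    have h1 := rr_pow_inv_cancel 1
    rw [pow_one] at h1
    rw [show rr^2 * (rr * ((rr^2)⁻¹ * qq 2)) = (rr^2*(rr^2)⁻¹)*(rr*qq 2) by ring, h2, one_mul,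
      pow_one,
      show rr^2 * ((1+X)^2 * (rr⁻¹ * qq 1) - Gsl 2) = (rr*rr⁻¹)*(rr*((1+X)^2*qq 1)) - rr^2*Gsl 2 by ring,
      h1, one_mul,
      show qq 2 = 2*X^2*(1+X)^(2*0+1) from rfl, show qq 1 = X * (2*X^2 + 3*X + 2) from rfl,
      show Gsl 2 = X*(1+X)*(2*X^2+X+1) from rfl, rr]
    ring
  | (m+2) =>
    apply mul_left_cancel₀ (rr_pow_ne_zero (m+3))
    show rr^(m+3) * (rr * ((rr^(m+3))⁻¹ * qq (m+3))) = rr^(m+3) * ((1+X)^2 * ((rr^(m+2))⁻¹ * qq (m+2)) - Gsl (m+3))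
    have h3 := rr_pow_inv_cancel (m+3)
    have h2 := rr_pow_inv_cancel (m+2)
    have hG : Gsl (m+3) = 0 := rfl
    rw [hG, show rr^(m+3) * (rr * ((rr^(m+3))⁻¹ * qq (m+3))) = (rr^(m+3)*(rr^(m+3))⁻¹)*(rr*qq (m+3)) by ring,
      h3, one_mul,
      show rr^(m+3) * ((1+X)^2 * ((rr^(m+2))⁻¹ * qq (m+2)) - 0) = (rr^(m+2)*(rr^(m+2))⁻¹)*(rr*((1+X)^2*qq (m+2))) by ring,
      h2, one_mul,
      show qq (m+3) = 2*X^2*(1+X)^(2*(m+1)+1) from rfl,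
      show qq (m+2) = 2*X^2*(1+X)^(2*m+1) from rfl]
    ring

def UU (m : ℕ) : PS := (X^2+2*X+(2*(m:PS)+4)) * (1+X)^(2*m+1) * (rr^(m+3))⁻¹
def WW (m : ℕ) : PS := (X^3+(2*(m:PS)+5)*X^2+(2*(m:PS)+4)*X) * (1+X)^(2*m+1) * (rr^(m+2))⁻¹

lemma hDofNat (n : ℕ) [n.AtLeastTwo] : d⁄dX ℂ (OfNat.ofNat n : PS) = 0 := by
  rw [← Nat.cast_ofNat]; exact Derivation.map_natCast _ _

lemma hDrr : d⁄dX ℂ rr = 1 := by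
  rw [rr, ← map_ofNat (C (R := ℂ)) 2]
  simp

lemma hDA (k : ℕ) : d⁄dX ℂ ((1+X : PS)^(k+1)) = ((k:PS)+1) * (1+X)^k := by
  rw [Derivation.leibniz_pow]
  simp [nsmul_eq_mul, smul_eq_mul]

lemma hDB2 (m : ℕ) : d⁄dX ℂ ((rr^(m+2))⁻¹ : PS)
    = -(((rr^(m+2))⁻¹)^2) * (((m:PS)+2) * rr^(m+1)) := by
  rw [derivative_inv', Derivation.leibniz_pow]
  simp [nsmul_eq_mul, smul_eq_mul, hDrr]

lemma hDQ (m : ℕ) : d⁄dX ℂ ((X^3+(2*(m:PS)+5)*X^2+(2*(m:PS)+4)*X) : PS)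
    = 3*X^2 + (2*(m:PS)+5)*(2*X) + (2*(m:PS)+4) := by
  have hm : ((m:ℕ):PS) = C (R := ℂ) ((m:ℕ):ℂ) := (map_natCast (C (R := ℂ)) m).symm
  rw [hm]
  simp [Derivation.leibniz, Derivation.leibniz_pow, nsmul_eq_mul, smul_eq_mul, hDofNat 2, hDofNat 4, hDofNat 5]

lemma hDW (m : ℕ) : d⁄dX ℂ (WW m) =
    (3*X^2 + (2*(m:PS)+5)*(2*X) + (2*(m:PS)+4)) * (1+X)^(2*m+1) * (rr^(m+2))⁻¹
    + (X^3+(2*(m:PS)+5)*X^2+(2*(m:PS)+4)*X) * ((2*(m:PS)+1) * (1+X)^(2*m)) * (rr^(m+2))⁻¹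
    + (X^3+(2*(m:PS)+5)*X^2+(2*(m:PS)+4)*X) * (1+X)^(2*m+1) *
        (-(((rr^(m+2))⁻¹)^2) * (((m:PS)+2) * rr^(m+1))) := by
  rw [WW]
  rw [Derivation.leibniz, Derivation.leibniz]
  rw [hDQ, hDB2]
  have : (2*m+1) = (2*m)+1 := rfl
  rw [this, hDA (2*m)]
  simp only [smul_eq_mul]
  push_cast
  ring

set_option maxHeartbeats 1600000 in
lemma key1 (m : ℕ) : X * d⁄dX ℂ (WW m) - ((m:PS)+2) * WW m = -(2*(m:PS)+2) * (X * UU m) := by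
  apply mul_right_cancel₀ (rr_pow_ne_zero (2*m+4))
  rw [hDW, WW, UU]
  have hb2 := rr_pow_inv_cancel (m+2)
  have hb3 := rr_pow_inv_cancel (m+3)
  calc (X * ((3*X^2 + (2*(m:PS)+5)*(2*X) + (2*(m:PS)+4)) * (1+X)^(2*m+1) * (rr^(m+2))⁻¹
      + (X^3+(2*(m:PS)+5)*X^2+(2*(m:PS)+4)*X) * ((2*(m:PS)+1) * (1+X)^(2*m)) * (rr^(m+2))⁻¹
      + (X^3+(2*(m:PS)+5)*X^2+(2*(m:PS)+4)*X) * (1+X)^(2*m+1) *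
        (-(((rr^(m+2))⁻¹)^2) * (((m:PS)+2) * rr^(m+1))))
      - ((m:PS)+2) * ((X^3+(2*(m:PS)+5)*X^2+(2*(m:PS)+4)*X) * (1+X)^(2*m+1) * (rr^(m+2))⁻¹)) * rr^(2*m+4)
      = (X*((3*X^2 + (2*(m:PS)+5)*(2*X) + (2*(m:PS)+4)) * (1+X)^(2*m+1))
          + X*(X^3+(2*(m:PS)+5)*X^2+(2*(m:PS)+4)*X)*((2*(m:PS)+1) * (1+X)^(2*m))
          - ((m:PS)+2)*((X^3+(2*(m:PS)+5)*X^2+(2*(m:PS)+4)*X) * (1+X)^(2*m+1))) * rr^(m+2)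
            * (rr^(m+2) * (rr^(m+2))⁻¹)
        - X*(X^3+(2*(m:PS)+5)*X^2+(2*(m:PS)+4)*X)*(1+X)^(2*m+1)*((m:PS)+2)*rr^(m+1)
            * ((rr^(m+2) * (rr^(m+2))⁻¹)^2) := by ring
    _ = (X*((3*X^2 + (2*(m:PS)+5)*(2*X) + (2*(m:PS)+4)) * (1+X)^(2*m+1))
          + X*(X^3+(2*(m:PS)+5)*X^2+(2*(m:PS)+4)*X)*((2*(m:PS)+1) * (1+X)^(2*m))
          - ((m:PS)+2)*((X^3+(2*(m:PS)+5)*X^2+(2*(m:PS)+4)*X) * (1+X)^(2*m+1))) * rr^(m+2)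
        - X*(X^3+(2*(m:PS)+5)*X^2+(2*(m:PS)+4)*X)*(1+X)^(2*m+1)*((m:PS)+2)*rr^(m+1) := by
        rw [hb2]; ring
    _ = (-(2*(m:PS)+2) * (X*((X^2+2*X+(2*(m:PS)+4)) * (1+X)^(2*m+1)))) * rr^(m+1)
          * (rr^(m+3) * (rr^(m+3))⁻¹) := by
        rw [hb3, mul_one, rr]; ring
    _ = -(2*(m:PS)+2) * (X * ((X^2+2*X+(2*(m:PS)+4)) * (1+X)^(2*m+1) * (rr^(m+3))⁻¹)) * rr^(2*m+4) := by
        ring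

lemma key3 (m : ℕ) : (2*(m:PS)+4) * g (m+3) - (2*(m:PS)+3) * (X * g (m+2)) = 2*X^2*UU m := by
  apply mul_right_cancel₀ (rr_pow_ne_zero (m+3))
  have hb2 := rr_pow_inv_cancel (m+2)
  have hb3 := rr_pow_inv_cancel (m+3)
  show ((2*(m:PS)+4) * ((rr^(m+3))⁻¹ * (2*X^2*(1+X)^(2*(m+1)+1)))
      - (2*(m:PS)+3) * (X * ((rr^(m+2))⁻¹ * (2*X^2*(1+X)^(2*m+1))))) * rr^(m+3)
      = 2*X^2*UU m * rr^(m+3)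
  rw [UU]
  calc _ = (2*(m:PS)+4) * (2*X^2*(1+X)^(2*(m+1)+1)) * (rr^(m+3)*(rr^(m+3))⁻¹)
         - (2*(m:PS)+3) * (X * (2*X^2*(1+X)^(2*m+1))) * rr * (rr^(m+2)*(rr^(m+2))⁻¹) := by ring
    _ = 2*X^2*((X^2+2*X+(2*(m:PS)+4)) * (1+X)^(2*m+1)) * (rr^(m+3)*(rr^(m+3))⁻¹) := by
        rw [hb2, hb3, rr]; ring
    _ = _ := by ring

lemma key2 (m : ℕ) : coeff (m+1) (UU m) = 0 := by
  have h := congrArg (coeff (m+2)) (key1 m)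
  rw [map_sub,
    show ((m:PS)+2) = C (R := ℂ) ((m:ℂ)+2) by rw [map_add, map_natCast, map_ofNat],
    coeff_C_mul, coeff_succ_X_mul, coeff_derivative,
    show -(2*(m:PS)+2) = C (R := ℂ) (-(2*(m:ℂ)+2)) by rw [map_neg, map_add, map_mul, map_natCast, map_ofNat],
    coeff_C_mul, coeff_succ_X_mul] at h
  have h2 : (-(2*(m:ℂ)+2)) * coeff (m+1) (UU m) = 0 := by
    rw [← h]; push_cast; ring
  rcases mul_eq_zero.mp h2 with h'|h'
  · exfalso
    have : (2*(m:ℂ)+2) = ((2*m+2 : ℕ):ℂ) := by push_cast; ring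
    rw [neg_eq_zero, this, Nat.cast_eq_zero] at h'
    omega
  · exact h'

def dd (n : ℕ) : ℂ := coeff n (g n)

lemma drec (m : ℕ) : (2*(m:ℂ)+4) * dd (m+3) = (2*(m:ℂ)+3) * dd (m+2) := by
  have h := congrArg (coeff (m+3)) (key3 m)
  rw [map_sub,
    show (2*(m:PS)+4) = C (R := ℂ) (2*(m:ℂ)+4) by rw [map_add, map_mul, map_natCast, map_ofNat, map_ofNat],
    show (2*(m:PS)+3) = C (R := ℂ) (2*(m:ℂ)+3) by rw [map_add, map_mul, map_natCast, map_ofNat, map_ofNat],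
    coeff_C_mul, coeff_C_mul, coeff_succ_X_mul,
    show (2*X^2*UU m : PS) = X*(X*(UU m + UU m)) by ring,
    coeff_succ_X_mul, coeff_succ_X_mul, map_add, key2] at h
  have : dd (m+3) = coeff (m+3) (g (m+3)) := rfl
  have h2 : dd (m+2) = coeff (m+2) (g (m+2)) := rfl
  rw [this, h2]
  linear_combination h

lemma e1 : rr * g 1 = qq 1 := by
  rw [g, pow_one, ← mul_assoc]
  have h := rr_pow_inv_cancel 1
  rw [pow_one] at h
  rw [h, one_mul]

lemma e2 : rr^2 * g 2 = qq 2 := by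
  rw [g, ← mul_assoc, rr_pow_inv_cancel 2, one_mul]

lemma dd1 : dd 1 = 1 := by
  have h0 := congrArg (coeff 0) e1
  have h1 := congrArg (coeff 1) e1
  rw [show rr * g 1 = (g 1 + g 1) + X * g 1 by rw [rr]; ring] at h0 h1
  rw [show qq 1 = X*((X^2+X^2)+(X+X+X)+(1+1)) by rw [qq]; ring] at h0 h1
  simp [coeff_succ_X_mul] at h0 h1
  show coeff 1 (g 1) = 1
  linear_combination h1/2 - h0/2

lemma dd2 : dd 2 = 1/2 := by
  have h0 := congrArg (coeff 0) e2
  have h1 := congrArg (coeff 1) e2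
  have h2 := congrArg (coeff 2) e2
  rw [show rr^2 * g 2 = ((g 2 + g 2) + (g 2 + g 2)) + X * ((g 2 + g 2) + (g 2 + g 2)) + X * (X * g 2)
      by rw [rr]; ring] at h0 h1 h2
  rw [show qq 2 = X*(X*((1+1)+(X+X))) by rw [qq]; ring] at h0 h1 h2
  simp [coeff_succ_X_mul] at h0 h1 h2
  show coeff 2 (g 2) = 1/2
  linear_combination h2/4 - h1/4 + (3/4) * h0

lemma ddval : ∀ n : ℕ, dd (n+1) = ((2*n).choose n : ℂ)/4^n
  | 0 => by simpa using dd1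
  | 1 => by rw [dd2]; norm_num
  | (k+2) => by
      have ih := ddval (k+1)
      have h := drec k
      rw [ih] at h
      have hnz : (2*(k:ℂ)+4) ≠ 0 := by
        have : (2*(k:ℂ)+4) = ((2*k+4 : ℕ):ℂ) := by push_cast; ring
        rw [this, Ne, Nat.cast_eq_zero]
        omega
      have hb : (k+2) * ((2*(k+2)).choose (k+2)) = 2*(2*k+3) * ((2*(k+1)).choose (k+1)) := by
        have := Nat.succ_mul_centralBinom_succ (k+1)
        simp only [Nat.centralBinom] at this
        convert this using 2 <;> omega
      have hb' : ((k:ℂ)+2) * ((2*(k+2)).choose (k+2) : ℂ)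
          = 2*(2*(k:ℂ)+3) * ((2*(k+1)).choose (k+1):ℂ) := by exact_mod_cast hb
      apply mul_left_cancel₀ hnz
      rw [h]
      linear_combination (-1/(2*(4:ℂ)^(k+1))) * hb'

lemma g0 : g 0 = 0 := by rw [g, show qq 0 = 0 from rfl, mul_zero]

def ii (a b : ℕ) : Fin 2 →₀ ℕ := Finsupp.equivFunOnFinite.symm ![a, b]

lemma ii_apply0 (a b : ℕ) : ii a b 0 = a := by simp [ii]
lemma ii_apply1 (a b : ℕ) : ii a b 1 = b := by simp [ii]

lemma ii_le (a b i j : ℕ) : ii i j ≤ ii a b ↔ i ≤ a ∧ j ≤ b := by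
  rw [Finsupp.le_def]
  constructor
  · intro h; exact ⟨by simpa [ii] using h 0, by simpa [ii] using h 1⟩
  · rintro ⟨h1,h2⟩ k; fin_cases k <;> simpa [ii]

lemma ii_sub (a b i j : ℕ) : ii a b - ii i j = ii (a-i) (b-j) := by
  ext k; fin_cases k <;> simp [ii, Finsupp.tsub_apply]

lemma ii_eq (a b i j : ℕ) : ii a b = ii i j ↔ a = i ∧ b = j := by
  rw [ii, ii, Equiv.apply_eq_iff_eq]
  constructor
  · intro h; exact ⟨by simpa using congrFun h 0, by simpa using congrFun h 1⟩
  · rintro ⟨rfl,rfl⟩; rfl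

lemma ii_surj (d : Fin 2 →₀ ℕ) : d = ii (d 0) (d 1) := by
  ext k; fin_cases k <;> simp [ii]

def F0 : MvPowerSeries (Fin 2) ℂ := fun d => PowerSeries.coeff (d 1) (g (d 0))

lemma coeff_F0 (d : Fin 2 →₀ ℕ) : MvPowerSeries.coeff d F0 = PowerSeries.coeff (d 1) (g (d 0)) := rfl

def MM (i j : ℕ) (c : ℂ) : MvPowerSeries (Fin 2) ℂ := MvPowerSeries.monomial (ii i j) c

def Hm : MvPowerSeries (Fin 2) ℂ := MM 1 0 1 + MM 1 1 2 + MM 1 2 1 - MM 0 1 1 - MM 0 0 2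
def Gm : MvPowerSeries (Fin 2) ℂ :=
  MM 1 1 (-2) + MM 1 2 (-3) + MM 1 3 (-2) + MM 2 1 1 + MM 2 2 2 + MM 2 3 3 + MM 2 4 2

lemma cA (f : PS) (b : ℕ) :
    coeff b (rr * f) = 2 * coeff b f + (if 1 ≤ b then coeff (b-1) f else 0) := by
  rw [show rr * f = (f + f) + f * X^1 by rw [rr]; ring, map_add, map_add, coeff_mul_X_pow']
  ring

lemma cB (f : PS) (b : ℕ) :
    coeff b ((1+X)^2 * f) = coeff b f + 2*(if 1 ≤ b then coeff (b-1) f else 0)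
      + (if 2 ≤ b then coeff (b-2) f else 0) := by
  rw [show (1+X)^2 * f = f + (f * X^1 + f * X^1) + f * X^2 by ring, map_add, map_add, map_add,
    coeff_mul_X_pow', coeff_mul_X_pow']
  ring


lemma hGslcoeff (a' b : ℕ) : coeff b (Gsl (a'+1)) =
    ((((((if a' + 1 = 1 ∧ b = 1 then (-2:ℂ) else 0) + if a' + 1 = 1 ∧ b = 2 then -3 else 0) +
              if a' + 1 = 1 ∧ b = 3 then -2 else 0) +
            if a' + 1 = 2 ∧ b = 1 then 1 else 0) +
          if a' + 1 = 2 ∧ b = 2 then 2 else 0) +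
        if a' + 1 = 2 ∧ b = 3 then 3 else 0) +
      if a' + 1 = 2 ∧ b = 4 then 2 else 0 := by
  rcases a' with _ | _ | k
  · rw [show Gsl 1 = -((X^1+X^1) + (X^2+X^2+X^2) + (X^3+X^3)) by
      show -(X * (2*X^2 + 3*X + 2)) = _; ring]
    simp only [map_neg, map_add, coeff_X_pow]
    norm_num
    split_ifs <;> first | norm_num | omega
  · rw [show Gsl 2 = (X^1 + (X^2+X^2) + (X^3+X^3+X^3) + (X^4+X^4)) by
      show X*(1+X)*(2*X^2+X+1) = _; ring]
    simp only [map_add, coeff_X_pow]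
    norm_num
    split_ifs <;> first | norm_num | omega
  · rw [show Gsl (k+3) = 0 from rfl, map_zero]
    have h1 : ¬(k+2+1 = 1) := by omega
    have h2 : ¬(k+2+1 = 2) := by omega
    simp [h1, h2]

lemma F0_mul_Hm : F0 * Hm = Gm := by
  apply MvPowerSeries.ext; intro d
  obtain ⟨a, b, rfl⟩ : ∃ a b, d = ii a b := ⟨_, _, ii_surj d⟩
  simp only [Hm, Gm, MM, mul_add, mul_sub, map_add, map_sub,
    MvPowerSeries.coeff_mul_monomial, MvPowerSeries.coeff_monomial, ii_le, ii_sub,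
    coeff_F0, ii_apply0, ii_apply1, ii_eq]
  rcases a with _ | a'
  · simp [g0]
  · have hgr := congrArg (coeff b) (grec a')
    simp only [map_sub] at hgr
    rw [cA, cB] at hgr
    have hG := hGslcoeff a' b
    simp only [Nat.le_add_left 1 a', Nat.zero_le, true_and, Nat.sub_zero, Nat.add_sub_cancel,
      mul_one, if_true]
    rw [show (if 1 ≤ b then coeff (b-1) (g a') * 2 else 0)
        = 2*(if 1 ≤ b then coeff (b-1) (g a') else 0) by split_ifs <;> ring]
    linear_combination hG - hgr

lemma ii_add (a c b d : ℕ) : ii a c + ii b d = ii (a+b) (c+d) := by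
  ext k; fin_cases k <;> simp [ii]

lemma sing0 (a : ℕ) : Finsupp.single (0 : Fin 2) a = ii a 0 := by
  ext k; fin_cases k <;> simp [ii, Finsupp.single_apply]

lemma sing1 (b : ℕ) : Finsupp.single (1 : Fin 2) b = ii 0 b := by
  ext k; fin_cases k <;> simp [ii, Finsupp.single_apply]

lemma MMmul (i j k l : ℕ) (c d : ℂ) : MM i j c * MM k l d = MM (i+k) (j+l) (c*d) := by
  rw [MM, MM, MM, MvPowerSeries.monomial_mul_monomial, ii_add]

lemma XX (a b : ℕ) : (MvPowerSeries.X 1 : MvPowerSeries (Fin 2) ℂ)^a * (MvPowerSeries.X 0)^b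
    = MM b a 1 := by
  rw [MvPowerSeries.X_pow_eq, MvPowerSeries.X_pow_eq, MvPowerSeries.monomial_mul_monomial,
    sing1, sing0, ii_add, MM, mul_one]
  norm_num

lemma two_eq : (2 : MvPowerSeries (Fin 2) ℂ) = MM 0 0 2 := by
  rw [MM, show ii 0 0 = 0 by ext k; fin_cases k <;> simp [ii],
    MvPowerSeries.monomial_zero_eq_C_apply, map_ofNat]

lemma three_eq : (3 : MvPowerSeries (Fin 2) ℂ) = MM 0 0 3 := by
  rw [MM, show ii 0 0 = 0 by ext k; fin_cases k <;> simp [ii],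
    MvPowerSeries.monomial_zero_eq_C_apply, map_ofNat]

lemma MMneg (i j : ℕ) (c : ℂ) : -MM i j c = MM i j (-c) := by
  rw [MM, MM, ← map_neg]

lemma Hexp : (-(MvPowerSeries.X 1) + (MvPowerSeries.X 1)^2 * MvPowerSeries.X 0 - 2
    + 2*(MvPowerSeries.X 1)*(MvPowerSeries.X 0) + MvPowerSeries.X 0 : MvPowerSeries (Fin 2) ℂ)
    = Hm := by
  calc (-(MvPowerSeries.X 1) + (MvPowerSeries.X 1)^2 * MvPowerSeries.X 0 - 2
    + 2*(MvPowerSeries.X 1)*(MvPowerSeries.X 0) + MvPowerSeries.X 0 : MvPowerSeries (Fin 2) ℂ)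
      = -((MvPowerSeries.X 1)^1*(MvPowerSeries.X 0)^0) + (MvPowerSeries.X 1)^2*(MvPowerSeries.X 0)^1
        - (2:MvPowerSeries (Fin 2) ℂ)
        + (2:MvPowerSeries (Fin 2) ℂ)*((MvPowerSeries.X 1)^1*(MvPowerSeries.X 0)^1)
        + (MvPowerSeries.X 1)^0*(MvPowerSeries.X 0)^1 := by ring
    _ = -(MM 0 1 1) + MM 1 2 1 - MM 0 0 2 + MM 0 0 2 * MM 1 1 1 + MM 1 0 1 := by
        rw [XX, XX, XX, XX, two_eq]
    _ = Hm := by rw [MMmul, Hm]; norm_num; abel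

lemma Gexp : ((MvPowerSeries.X 1) * (MvPowerSeries.X 0) * (-3*(MvPowerSeries.X 1)
    + 3*(MvPowerSeries.X 1)^2*(MvPowerSeries.X 0) - 2 + 2*(MvPowerSeries.X 1)*(MvPowerSeries.X 0)
    + MvPowerSeries.X 0 - 2*(MvPowerSeries.X 1)^2 + 2*(MvPowerSeries.X 1)^3*(MvPowerSeries.X 0)
    : MvPowerSeries (Fin 2) ℂ)) = Gm := by
  have h3 : ∀ (i j : ℕ), (3:MvPowerSeries (Fin 2) ℂ) * MM i j 1 = MM i j 3 := by
    intro i j; rw [three_eq, MMmul]; norm_num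
  have h2 : ∀ (i j : ℕ), (2:MvPowerSeries (Fin 2) ℂ) * MM i j 1 = MM i j 2 := by
    intro i j; rw [two_eq, MMmul]; norm_num
  calc _ = -((3:MvPowerSeries (Fin 2) ℂ)*((MvPowerSeries.X 1)^2*(MvPowerSeries.X 0)^1))
        + (3:MvPowerSeries (Fin 2) ℂ)*((MvPowerSeries.X 1)^3*(MvPowerSeries.X 0)^2)
        - (2:MvPowerSeries (Fin 2) ℂ)*((MvPowerSeries.X 1)^1*(MvPowerSeries.X 0)^1)
        + (2:MvPowerSeries (Fin 2) ℂ)*((MvPowerSeries.X 1)^2*(MvPowerSeries.X 0)^2)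
        + (MvPowerSeries.X 1)^1*(MvPowerSeries.X 0)^2
        - (2:MvPowerSeries (Fin 2) ℂ)*((MvPowerSeries.X 1)^3*(MvPowerSeries.X 0)^1)
        + (2:MvPowerSeries (Fin 2) ℂ)*((MvPowerSeries.X 1)^4*(MvPowerSeries.X 0)^2) := by ring
    _ = -(MM 1 2 3) + MM 2 3 3 - MM 1 1 2 + MM 2 2 2 + MM 2 1 1 - MM 1 3 2 + MM 2 4 2 := by
        rw [XX, XX, XX, XX, XX, XX, XX, h3, h3, h2, h2, h2, h2]
    _ = Gm := by rw [Gm]; simp only [sub_eq_add_neg, MMneg]; abel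


lemma coe_num (n : ℕ) [n.AtLeastTwo] :
    ((OfNat.ofNat n : MvPolynomial (Fin 2) ℂ) : MvPowerSeries (Fin 2) ℂ) = OfNat.ofNat n := by
  rw [← MvPolynomial.coeToMvPowerSeries.ringHom_apply, map_ofNat]

lemma coe_neg' (p : MvPolynomial (Fin 2) ℂ) :
    ((-p : MvPolynomial (Fin 2) ℂ) : MvPowerSeries (Fin 2) ℂ) = -(p : MvPowerSeries (Fin 2) ℂ) := by
  rw [← MvPolynomial.coeToMvPowerSeries.ringHom_apply, ← MvPolynomial.coeToMvPowerSeries.ringHom_apply, map_neg]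

lemma coe_sub' (p q : MvPolynomial (Fin 2) ℂ) :
    ((p - q : MvPolynomial (Fin 2) ℂ) : MvPowerSeries (Fin 2) ℂ)
      = (p : MvPowerSeries (Fin 2) ℂ) - (q : MvPowerSeries (Fin 2) ℂ) := by
  rw [← MvPolynomial.coeToMvPowerSeries.ringHom_apply, ← MvPolynomial.coeToMvPowerSeries.ringHom_apply,
    ← MvPolynomial.coeToMvPowerSeries.ringHom_apply, map_sub]

lemma coe_two : ((2 : MvPolynomial (Fin 2) ℂ) : MvPowerSeries (Fin 2) ℂ) = 2 := by
  rw [← MvPolynomial.coeToMvPowerSeries.ringHom_apply, map_ofNat]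

lemma coe_three : ((3 : MvPolynomial (Fin 2) ℂ) : MvPowerSeries (Fin 2) ℂ) = 3 := by
  rw [← MvPolynomial.coeToMvPowerSeries.ringHom_apply, map_ofNat]

lemma h00 : (0 : Fin 2 →₀ ℕ) = ii 0 0 := by ext k; fin_cases k <;> simp [ii]

lemma constHm : MvPowerSeries.constantCoeff Hm ≠ 0 := by
  have : MvPowerSeries.constantCoeff Hm = -2 := by
    rw [← MvPowerSeries.coeff_zero_eq_constantCoeff_apply]
    simp [Hm, MM, MvPowerSeries.coeff_monomial, h00, ii_eq]
  rw [this]; norm_num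

end
end BUDiag

open MvPolynomial

/-- The Maclaurin coefficients of `f(x₁) = x₁/√(1-x₁)`, namely `f₀ = 0` and
`f_n = binom(2n-2, n-1)/4^{n-1}` for `n ≥ 1`, are the diagonal coefficients of the
rational function `F = G/H`. -/
theorem basic_univariate_diagonal
    (G H : MvPolynomial (Fin 2) ℂ)
    (hG : G = X 1 * X 0 * (-3 * X 1 + 3 * (X 1) ^ 2 * X 0 - 2 + 2 * X 1 * X 0 + X 0
      - 2 * (X 1) ^ 2 + 2 * (X 1) ^ 3 * X 0))
    (hH : H = -X 1 + (X 1) ^ 2 * X 0 - 2 + 2 * X 1 * X 0 + X 0)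
    (F : MvPowerSeries (Fin 2) ℂ)
    (hF : F = (G : MvPowerSeries (Fin 2) ℂ) * (H : MvPowerSeries (Fin 2) ℂ)⁻¹) :
    MvPowerSeries.coeff (Finsupp.equivFunOnFinite.symm ![0, 0]) F = 0 ∧
    ∀ n : ℕ, 1 ≤ n →
      MvPowerSeries.coeff (Finsupp.equivFunOnFinite.symm ![n, n]) F =
        (Nat.choose (2 * n - 2) (n - 1) : ℂ) / 4 ^ (n - 1) := by
  classical
  have hHc : (H : MvPowerSeries (Fin 2) ℂ) = BUDiag.Hm := by
    rw [hH]
    simp only [MvPolynomial.coe_add, BUDiag.coe_sub', BUDiag.coe_neg', MvPolynomial.coe_mul,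
      MvPolynomial.coe_pow, MvPolynomial.coe_X, BUDiag.coe_two, BUDiag.coe_three]
    exact BUDiag.Hexp
  have hGc : (G : MvPowerSeries (Fin 2) ℂ) = BUDiag.Gm := by
    rw [hG]
    simp only [MvPolynomial.coe_add, BUDiag.coe_sub', BUDiag.coe_neg', MvPolynomial.coe_mul,
      MvPolynomial.coe_pow, MvPolynomial.coe_X, BUDiag.coe_two, BUDiag.coe_three]
    exact BUDiag.Gexp
  have hFeq : F = BUDiag.F0 := by
    rw [hF, hGc, hHc, ← BUDiag.F0_mul_Hm, mul_assoc,
      MvPowerSeries.mul_inv_cancel _ BUDiag.constHm, mul_one]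
  constructor
  · rw [hFeq]
    show MvPowerSeries.coeff (BUDiag.ii 0 0) BUDiag.F0 = 0
    rw [BUDiag.coeff_F0, BUDiag.ii_apply0, BUDiag.ii_apply1, BUDiag.g0, map_zero]
  · rintro n hn
    obtain ⟨k, rfl⟩ : ∃ k, n = k + 1 := ⟨n - 1, by omega⟩
    rw [hFeq]
    show MvPowerSeries.coeff (BUDiag.ii (k+1) (k+1)) BUDiag.F0 = _
    rw [BUDiag.coeff_F0, BUDiag.ii_apply0, BUDiag.ii_apply1]
    have := BUDiag.ddval k
    rw [BUDiag.dd] at this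
    rw [this, show 2*(k+1)-2 = 2*k by omega, Nat.add_sub_cancel]
end

section
/- Let H(x₁,x₂) = −x₂ + x₂²x₁ − 2 + 2x₂x₁ + x₁. There are no critical points of H for the direction α = (1,1): no point x ∈ ℂ² satisfies both H(x) = 0 and x₁·∂₁H(x) = x₂·∂₂H(x). -/
open MvPolynomial

/-- `H(x₁,x₂) = -x₂ + x₂²x₁ - 2 + 2x₂x₁ + x₁` has no critical points for the
direction `α = (1,1)`. -/
theorem basic_univariate_no_critical_points
    (H : MvPolynomial (Fin 2) ℂ)
    (hH : H = -X 1 + (X 1) ^ 2 * X 0 - 2 + 2 * X 1 * X 0 + X 0) :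
    ¬ ∃ x : Fin 2 → ℂ,
      eval x H = 0 ∧ x 0 * eval x (pderiv 0 H) = x 1 * eval x (pderiv 1 H) := by
  rintro ⟨x, h1, h2⟩
  subst hH
  have hp0 : (pderiv (0 : Fin 2)) (2 : MvPolynomial (Fin 2) ℂ) = 0 := by
    rw [show (2 : MvPolynomial (Fin 2) ℂ) = C 2 from (map_ofNat C 2).symm, pderiv_C]
  have hp1 : (pderiv (1 : Fin 2)) (2 : MvPolynomial (Fin 2) ℂ) = 0 := by
    rw [show (2 : MvPolynomial (Fin 2) ℂ) = C 2 from (map_ofNat C 2).symm, pderiv_C]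
  simp only [map_add, map_sub, map_neg, map_mul, map_pow, map_ofNat, eval_X,
    Derivation.leibniz, Derivation.leibniz_pow, pderiv_X, map_neg, map_sub, map_add,
    Pi.single_apply, smul_eq_mul, hp0, hp1, map_zero] at h1 h2
  norm_num at h1 h2
  have key : (1 : ℂ) = 0 := by
    linear_combination ((x 1 - 1)/2) * h1 + ((x 1 + 1)/2) * h2
  exact one_ne_zero key
end

section
/- Let H(x₁,x₂) = −x₂ + x₂²x₁ − 2 + 2x₂x₁ + x₁ and let λ ∈ ℝ with 0 < λ < 1 (so that λ² − 10λ + 9 > 0 and its positive real square root s = √(λ² − 10λ + 9) is defined). The set of critical points of H for the direction α = (1, λ), i.e., the set of x ∈ ℂ² satisfying H(x) = 0 and λ·x₁·∂₁H(x) = x₂·∂₂H(x), is exactly the two-element set { (λ²/8 + (λ/8 − 3/8)·s − λ + 7/8, (3 − 3λ + s)/(2(λ−1))), (λ²/8 − (λ/8 − 3/8)·s − λ + 7/8, (3 − 3λ − s)/(2(λ−1))) }. -/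
open MvPolynomial

/-- For `0 < λ < 1` the critical points of `H(x₁,x₂) = -x₂ + x₂²x₁ - 2 + 2x₂x₁ + x₁` for
the direction `α = (1, λ)` are exactly the two points given in terms of
`s = √(λ² - 10λ + 9)`. -/
theorem basic_univariate_perturbed_critical_points
    (H : MvPolynomial (Fin 2) ℂ)
    (hH : H = -X 1 + (X 1) ^ 2 * X 0 - 2 + 2 * X 1 * X 0 + X 0)
    (l : ℝ) (hl0 : 0 < l) (hl1 : l < 1)
    (s : ℝ) (hs : s = Real.sqrt (l ^ 2 - 10 * l + 9)) :
    ∀ x : Fin 2 → ℂ,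
      (eval x H = 0 ∧
        (l : ℂ) * x 0 * eval x (pderiv 0 H) = x 1 * eval x (pderiv 1 H)) ↔
      (x = ![(l : ℂ) ^ 2 / 8 + ((l : ℂ) / 8 - 3 / 8) * (s : ℂ) - (l : ℂ) + 7 / 8,
              (3 - 3 * (l : ℂ) + (s : ℂ)) / (2 * ((l : ℂ) - 1))] ∨
       x = ![(l : ℂ) ^ 2 / 8 - ((l : ℂ) / 8 - 3 / 8) * (s : ℂ) - (l : ℂ) + 7 / 8,
              (3 - 3 * (l : ℂ) - (s : ℂ)) / (2 * ((l : ℂ) - 1))]) := by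
  have hc : ∀ i : Fin 2, (pderiv i) (2 : MvPolynomial (Fin 2) ℂ) = 0 := by
    intro i
    rw [show (2:MvPolynomial (Fin 2) ℂ) = C 2 from (map_ofNat C 2).symm]
    simp
  set L : ℂ := (l : ℂ) with hLdef
  set S : ℂ := (s : ℂ) with hSdef
  have hsr : s ^ 2 = l ^ 2 - 10 * l + 9 := by
    rw [hs, Real.sq_sqrt]; nlinarith
  have hS2 : S ^ 2 = L ^ 2 - 10 * L + 9 := by
    have := congrArg (Complex.ofReal) hsr
    push_cast at this
    rw [hLdef, hSdef]; exact_mod_cast hsr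
  have hL : L - 1 ≠ 0 := by
    intro h
    have h1 : ((l - 1 : ℝ) : ℂ) = 0 := by rw [hLdef] at h; push_cast; linear_combination h
    have h2 : l - 1 = 0 := by exact_mod_cast h1
    linarith
  have h4 : (4:ℂ) * (L - 1) ≠ 0 := by simp [hL]
  have h2L : (2:ℂ) * (L - 1) ≠ 0 := by simp [hL]
  -- master lemma, plus sign
  have masterP : ∀ A B : ℂ, A = L ^ 2 / 8 + (L / 8 - 3 / 8) * S - L + 7 / 8 →
      2 * (L - 1) * B = 3 - 3 * L + S →
      (-B + B ^ 2 * A - 2 + 2 * B * A + A = 0) ∧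
      (L * A * (B ^ 2 + 2 * B + 1) = B * (-1 + 2 * B * A + 2 * A)) := by
    intro A B hA hB2
    subst hA
    constructor
    · apply mul_left_cancel₀ h4
      rw [mul_zero]
      linear_combination ((9/4:ℂ) + (7/4:ℂ)*B + (-5/4:ℂ)*S + (-3/4:ℂ)*S*B + (-5/2:ℂ)*L + (-2:ℂ)*L*B + (1/4:ℂ)*L*S + (1/4:ℂ)*L*S*B + (1/4:ℂ)*L^2 + (1/4:ℂ)*L^2*B) * hB2 + ((-5/4:ℂ) + (-3/4:ℂ)*B + (1/4:ℂ)*L + (1/4:ℂ)*L*B) * hS2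
    · apply mul_left_cancel₀ h4
      linear_combination ((-3:ℂ) + (-7/2:ℂ)*B + S + (3/2:ℂ)*S*B + (21/4:ℂ)*L + (23/4:ℂ)*L*B + (-5/4:ℂ)*L*S + (-5/4:ℂ)*L*S*B + (-5/2:ℂ)*L^2 + (-5/2:ℂ)*L^2*B + (1/4:ℂ)*L^2*S + (1/4:ℂ)*L^2*S*B + (1/4:ℂ)*L^3 + (1/4:ℂ)*L^3*B) * hB2 + ((1:ℂ) + (3/2:ℂ)*B + (-5/4:ℂ)*L + (-5/4:ℂ)*L*B + (1/4:ℂ)*L^2 + (1/4:ℂ)*L^2*B) * hS2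
  -- master lemma, minus sign
  have masterM : ∀ A B : ℂ, A = L ^ 2 / 8 - (L / 8 - 3 / 8) * S - L + 7 / 8 →
      2 * (L - 1) * B = 3 - 3 * L - S →
      (-B + B ^ 2 * A - 2 + 2 * B * A + A = 0) ∧
      (L * A * (B ^ 2 + 2 * B + 1) = B * (-1 + 2 * B * A + 2 * A)) := by
    intro A B hA hB2
    subst hA
    constructor
    · apply mul_left_cancel₀ h4
      rw [mul_zero]
      linear_combination ((9/4:ℂ) + (7/4:ℂ)*B + (5/4:ℂ)*S + (3/4:ℂ)*S*B + (-5/2:ℂ)*L + (-2:ℂ)*L*B + (-1/4:ℂ)*L*S + (-1/4:ℂ)*L*S*B + (1/4:ℂ)*L^2 + (1/4:ℂ)*L^2*B) * hB2 + ((-5/4:ℂ) + (-3/4:ℂ)*B + (1/4:ℂ)*L + (1/4:ℂ)*L*B) * hS2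
    · apply mul_left_cancel₀ h4
      linear_combination ((-3:ℂ) + (-7/2:ℂ)*B + (-1:ℂ)*S + (-3/2:ℂ)*S*B + (21/4:ℂ)*L + (23/4:ℂ)*L*B + (5/4:ℂ)*L*S + (5/4:ℂ)*L*S*B + (-5/2:ℂ)*L^2 + (-5/2:ℂ)*L^2*B + (-1/4:ℂ)*L^2*S + (-1/4:ℂ)*L^2*S*B + (1/4:ℂ)*L^3 + (1/4:ℂ)*L^3*B) * hB2 + ((1:ℂ) + (3/2:ℂ)*B + (-5/4:ℂ)*L + (-5/4:ℂ)*L*B + (1/4:ℂ)*L^2 + (1/4:ℂ)*L^2*B) * hS2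
  intro x
  have hev1 : eval x H = -x 1 + (x 1) ^ 2 * x 0 - 2 + 2 * x 1 * x 0 + x 0 := by
    simp [hH]
  have hev2 : eval x (pderiv 0 H) = (x 1) ^ 2 + 2 * x 1 + 1 := by
    simp [hH, hc]
  have hev3 : eval x (pderiv 1 H) = -1 + 2 * x 1 * x 0 + 2 * x 0 := by
    simp [hH, hc]; ring
  rw [hev1, hev2, hev3]
  set A := x 0 with hAdef
  set B := x 1 with hBdef
  constructor
  · rintro ⟨h1, h2⟩
    have hB1 : B + 1 ≠ 0 := by
      intro h
      have : (-1 : ℂ) = 0 := by linear_combination h1 - (A * (B + 1) - 1) * h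
      norm_num at this
    have hA1 : A * (B + 1) ^ 2 = B + 2 := by linear_combination h1
    have key : L * (B + 2) * (B + 1) = B * (B + 3) := by
      linear_combination (B + 1) * h2 - (L * (B + 1) - 2 * B) * hA1
    have hfact : (2 * (L - 1) * B - (3 - 3 * L + S)) * (2 * (L - 1) * B - (3 - 3 * L - S)) = 0 := by
      linear_combination 4 * (L - 1) * key - hS2
    rcases mul_eq_zero.mp hfact with h | h
    · left
      have hB2 : 2 * (L - 1) * B = 3 - 3 * L + S := by linear_combination h
      have hBval : B = (3 - 3 * L + S) / (2 * (L - 1)) := by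
        rw [eq_div_iff h2L]; linear_combination hB2
      obtain ⟨p1, _⟩ := masterP (L ^ 2 / 8 + (L / 8 - 3 / 8) * S - L + 7 / 8) B rfl hB2
      have hAval : A = L ^ 2 / 8 + (L / 8 - 3 / 8) * S - L + 7 / 8 := by
        have hz : (A - (L ^ 2 / 8 + (L / 8 - 3 / 8) * S - L + 7 / 8)) * (B + 1) ^ 2 = 0 := by
          linear_combination hA1 - p1
        rcases mul_eq_zero.mp hz with h' | h'
        · linear_combination h'
        · exact absurd h' (pow_ne_zero 2 hB1)
      funext i
      fin_cases i
      · simpa using hAval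
      · simpa using hBval
    · right
      have hB2 : 2 * (L - 1) * B = 3 - 3 * L - S := by linear_combination h
      have hBval : B = (3 - 3 * L - S) / (2 * (L - 1)) := by
        rw [eq_div_iff h2L]; linear_combination hB2
      obtain ⟨p1, _⟩ := masterM (L ^ 2 / 8 - (L / 8 - 3 / 8) * S - L + 7 / 8) B rfl hB2
      have hAval : A = L ^ 2 / 8 - (L / 8 - 3 / 8) * S - L + 7 / 8 := by
        have hz : (A - (L ^ 2 / 8 - (L / 8 - 3 / 8) * S - L + 7 / 8)) * (B + 1) ^ 2 = 0 := by
          linear_combination hA1 - p1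
        rcases mul_eq_zero.mp hz with h' | h'
        · linear_combination h'
        · exact absurd h' (pow_ne_zero 2 hB1)
      funext i
      fin_cases i
      · simpa using hAval
      · simpa using hBval
  · rintro (h | h)
    · have hA' : A = L ^ 2 / 8 + (L / 8 - 3 / 8) * S - L + 7 / 8 := by
        rw [hAdef, h]; simp
      have hB' : B = (3 - 3 * L + S) / (2 * (L - 1)) := by
        rw [hBdef, h]; simp
      have hB2 : 2 * (L - 1) * B = 3 - 3 * L + S := by
        rw [hB']; field_simp
      obtain ⟨p1, p2⟩ := masterP A B hA' hB2
      exact ⟨p1, p2⟩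
    · have hA' : A = L ^ 2 / 8 - (L / 8 - 3 / 8) * S - L + 7 / 8 := by
        rw [hAdef, h]; simp
      have hB' : B = (3 - 3 * L - S) / (2 * (L - 1)) := by
        rw [hBdef, h]; simp
      have hB2 : 2 * (L - 1) * B = 3 - 3 * L - S := by
        rw [hB']; field_simp
      obtain ⟨p1, p2⟩ := masterM A B hA' hB2
      exact ⟨p1, p2⟩
end

section
/- Let F = G·H⁻¹ ∈ ℂ[[x₁,x₂,x₃]] where G = x₃x₁(3x₃ + 2 + x₁ + x₂x₁ + 2x₃²) and H = x₃ + 2 + x₁ + x₂x₁ (note H(0,0,0) = 2 ≠ 0). Then for all (a,b) ∈ ℕ², the Maclaurin coefficient f_{(a,b)} of the algebraic function f(x₁,x₂) = x₁·√(1 − x₁ − x₂) equals F_{(a+b, b, a+b)}; here f_{(a,b)} = 0 if a = 0, f_{(1,0)} = 1, and for a ≥ 1 with a + b ≥ 2, f_{(a,b)} = −C_{a+b−2}·binom(a+b−1, b)/(2·4^{a+b−2}), where C_m is the m-th Catalan number. -/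
open MvPolynomial

/-! ### Auxiliary arithmetic -/

noncomputable def gg (p j q : ℕ) : ℂ :=
  (-1)^(p+q) * ((p+q).choose p) * (p.choose j) / 2^(p+q)

lemma gg_p0 (j q : ℕ) : 2 * gg 0 j (q+1) + gg 0 j q = 0 := by
  unfold gg
  simp only [Nat.zero_add, Nat.choose_zero_right, Nat.cast_one]
  field_simp
  simp only [pow_succ]
  ring

lemma gg_q0_0 (p : ℕ) : 2 * gg (p+1) 0 0 + gg p 0 0 = 0 := by
  unfold gg
  simp only [Nat.add_zero, Nat.choose_self, Nat.choose_zero_right, Nat.cast_one]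
  field_simp
  simp only [pow_succ]
  ring

lemma gg_q0_S (p j : ℕ) : 2 * gg (p+1) (j+1) 0 + gg p (j+1) 0 + gg p j 0 = 0 := by
  unfold gg
  simp only [Nat.add_zero, Nat.choose_self, Nat.choose_succ_succ p j, Nat.cast_one]
  push_cast
  field_simp
  simp only [pow_succ]
  ring

lemma gg_rec0 (p q : ℕ) : 2 * gg (p+1) 0 (q+1) + gg (p+1) 0 q + gg p 0 (q+1) = 0 := by
  unfold gg
  have h1 : (p+1)+(q+1) = (p+q+1)+1 := by ring
  have h2 : (p+1)+q = (p+q)+1 := by ring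
  have h3 : p+(q+1) = (p+q)+1 := by ring
  rw [h1, h2, h3, Nat.choose_succ_succ (p+q+1) p]
  simp only [Nat.choose_zero_right, Nat.cast_one]
  push_cast
  field_simp
  simp only [pow_succ]
  ring

lemma gg_recS (p q j : ℕ) :
    2 * gg (p+1) (j+1) (q+1) + gg (p+1) (j+1) q + gg p (j+1) (q+1) + gg p j (q+1) = 0 := by
  unfold gg
  have h1 : (p+1)+(q+1) = (p+q+1)+1 := by ring
  have h2 : (p+1)+q = (p+q)+1 := by ring
  have h3 : p+(q+1) = (p+q)+1 := by ring
  rw [h1, h2, h3, Nat.choose_succ_succ (p+q+1) p, Nat.choose_succ_succ p j]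
  push_cast
  field_simp
  simp only [pow_succ]
  ring

lemma gg_000 : gg 0 0 0 = 1 := by unfold gg; simp

lemma gg_0S (j q : ℕ) : gg 0 (j+1) q = 0 := by
  unfold gg; simp [Nat.choose_eq_zero_of_lt (Nat.succ_pos j)]

lemma gg_eq_zero {p j : ℕ} (q : ℕ) (h : p < j) : gg p j q = 0 := by
  unfold gg
  rw [Nat.choose_eq_zero_of_lt h]
  simp

/-! ### The coefficient function of `G/H` -/

noncomputable def phi (i j k : ℕ) : ℂ :=
  (if i = 1 ∧ j = 0 ∧ k = 1 then 1 else 0)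
  + (if 1 ≤ i ∧ 2 ≤ k then gg (i-1) j (k-2) else 0)
  + (if 1 ≤ i ∧ 3 ≤ k then gg (i-1) j (k-3) else 0)

lemma phi_k0 (i j : ℕ) : phi i j 0 = 0 := by simp [phi]
lemma phi_k1 (i j : ℕ) : phi i j 1 = if i = 1 ∧ j = 0 then 1 else 0 := by simp [phi]
lemma phi_i0 (j k : ℕ) : phi 0 j k = 0 := by simp [phi]
lemma phi_k2 (i j : ℕ) : phi (i+1) j 2 = gg i j 0 := by simp [phi]
lemma phi_k3 (i j q : ℕ) : phi (i+1) j (q+3) = gg i j (q+1) + gg i j q := by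
  have h1 : ¬ (i + 1 = 1 ∧ j = 0 ∧ q + 3 = 1) := by omega
  simp [phi, h1, Nat.add_sub_cancel]

lemma key (i j k : ℕ) :
    (if 1 ≤ k then phi i j (k-1) else 0)
      + 2 * phi i j k
      + (if 1 ≤ i then phi (i-1) j k else 0)
      + (if 1 ≤ i ∧ 1 ≤ j then phi (i-1) (j-1) k else 0)
    = (if i = 1 ∧ j = 0 ∧ k = 1 then 2 else 0)
      + (if i = 1 ∧ j = 0 ∧ k = 2 then 3 else 0)
      + (if i = 1 ∧ j = 0 ∧ k = 3 then 2 else 0)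
      + (if i = 2 ∧ j = 0 ∧ k = 1 then 1 else 0)
      + (if i = 2 ∧ j = 1 ∧ k = 1 then 1 else 0) := by
  rcases i with _|i
  · simp [phi_i0]
  rcases k with _|_|_|q
  · -- k = 0
    simp [phi_k0]
  · -- k = 1
    rcases i with _|_|i <;> rcases j with _|_|j <;>
      (try simp [phi_k1, phi_k0, phi_i0]) <;> (try norm_num)
  · -- k = 2
    rcases i with _|i
    · -- i = 1
      rcases j with _|j <;>
        (try simp [phi_k2, phi_k1, phi_i0, gg_000, gg_0S]) <;> (try norm_num)
    · -- i = p+2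
      rcases j with _|j
      · simp [phi_k2, phi_k1, phi_i0, Nat.add_sub_cancel]
        linear_combination gg_q0_0 i
      · simp [phi_k2, phi_k1, phi_i0, Nat.add_sub_cancel]
        linear_combination gg_q0_S i j
  · -- k = q+3
    rcases i with _|p
    · -- i = 1
      rcases q with _|q
      · rcases j with _|j
        · simp [phi_k3, phi_k2, phi_i0]
          linear_combination gg_p0 0 0 + 2 * gg_000
        · simp [phi_k3, phi_k2, phi_i0, gg_0S]
      · rcases j with _|j
        · simp [phi_k3, phi_i0, show q+1+3-1 = q+3 from rfl]
          linear_combination gg_p0 0 (q+1) + gg_p0 0 q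
        · simp [phi_k3, phi_i0, gg_0S, show q+1+3-1 = q+3 from rfl]
    · -- i = p+2
      rcases q with _|q
      · rcases j with _|j
        · simp [phi_k3, phi_k2, Nat.add_sub_cancel]
          linear_combination gg_rec0 p 0 + gg_q0_0 p
        · simp [phi_k3, phi_k2, Nat.add_sub_cancel]
          linear_combination gg_recS p 0 j + gg_q0_S p j
      · rcases j with _|j
        · simp [phi_k3, Nat.add_sub_cancel, show q+1+3-1 = q+3 from rfl]
          linear_combination gg_rec0 p (q+1) + gg_rec0 p q
        · simp [phi_k3, Nat.add_sub_cancel, show q+1+3-1 = q+3 from rfl]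
          linear_combination gg_recS p (q+1) j + gg_recS p q j

lemma catalan_id (M : ℕ) :
    catalan M + Nat.choose (2*M) (M+1) = Nat.choose (2*M) M := by
  apply Nat.eq_of_mul_eq_mul_left (show 0 < M + 1 by omega)
  have h1 := succ_mul_catalan_eq_centralBinom M
  have h2 := Nat.choose_succ_right_eq (2*M) M
  have h3 : Nat.centralBinom M = Nat.choose (2*M) M := rfl
  have h4 : 2*M - M = M := by omega
  rw [h4] at h2
  rw [Nat.mul_add, h1, h3]
  nlinarith [h2]

/-- Evaluation of `phi` on the diagonal indices. -/
lemma phi_n (m b : ℕ) :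
    phi (m+2) b (m+2) = -(catalan m : ℂ) * ((m+1).choose b) / (2*4^m) := by
  rcases m with _|m
  · rw [show (0:ℕ)+2 = 0+1+1 from rfl, phi_k2]
    unfold gg
    norm_num
  · have h : phi (m+1+2) b (m+1+2) = gg (m+2) b (m+1) + gg (m+2) b m := phi_k3 (m+2) b m
    rw [h]
    unfold gg
    rw [show (m+2)+(m+1) = 2*m+3 from by ring, show (m+2)+m = 2*m+2 from by ring]
    have hps : ((2*m+3).choose (m+2) : ℂ)
        = (2*m+2).choose (m+1) + (2*m+2).choose (m+2) := by
      have := Nat.choose_succ_succ (2*m+2) (m+1)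
      push_cast [show (2*m+2)+1 = 2*m+3 from rfl] at this ⊢
      exact_mod_cast this
    have hc : (catalan (m+1) : ℂ)
        = (2*m+2).choose (m+1) - (2*m+2).choose (m+2) := by
      have := catalan_id (m+1)
      have h2 : (catalan (m+1) : ℂ) + (2*m+2).choose (m+2) = (2*m+2).choose (m+1) := by
        exact_mod_cast this
      linear_combination h2
    rw [hps, hc]
    have hpow : ((-1:ℂ))^(2*m+3) = -1 := Odd.neg_one_pow ⟨m+1, by ring⟩
    have hpow2 : ((-1:ℂ))^(2*m+2) = 1 := Even.neg_one_pow ⟨m+1, by ring⟩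
    rw [hpow, hpow2, show ((4:ℂ))^(m+1) = 2^(2*m+2) from by
      rw [show (4:ℂ) = 2^2 from by norm_num, ← pow_mul, show 2*(m+1) = 2*m+2 from by ring]]
    rw [show (2:ℂ)^(2*m+3) = 2^(2*m+2) * 2 from by rw [← pow_succ]]
    have h2e : ((2:ℂ))^(2*m+2) ≠ 0 := pow_ne_zero _ two_ne_zero
    field_simp
    ring

lemma finsupp_eq_iff (μ ν : Fin 3 →₀ ℕ) :
    μ = ν ↔ μ 0 = ν 0 ∧ μ 1 = ν 1 ∧ μ 2 = ν 2 := by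
  constructor
  · rintro rfl; exact ⟨rfl, rfl, rfl⟩
  · rintro ⟨h0, h1, h2⟩
    ext s
    fin_cases s <;> assumption

lemma finsupp_le_iff (μ : Fin 3 →₀ ℕ) :
    Finsupp.single (1 : Fin 3) 1 + Finsupp.single 0 1 ≤ μ ↔ 1 ≤ μ 0 ∧ 1 ≤ μ 1 := by
  rw [Finsupp.le_def]
  constructor
  · intro h
    refine ⟨?_, ?_⟩
    · have := h 0; simpa [Finsupp.single_apply] using this
    · have := h 1; simpa [Finsupp.single_apply] using this
  · rintro ⟨h0, h1⟩ s
    fin_cases s <;> simp [Finsupp.single_apply] <;> omega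

noncomputable def Phi : MvPowerSeries (Fin 3) ℂ := fun μ => phi (μ 0) (μ 1) (μ 2)

lemma coeff_Phi (μ : Fin 3 →₀ ℕ) :
    MvPowerSeries.coeff μ Phi = phi (μ 0) (μ 1) (μ 2) := rfl

/-- The Maclaurin coefficients of `f(x₁,x₂) = x₁√(1-x₁-x₂)` equal the coefficients
`F_{(a+b, b, a+b)}` of the trivariate rational function `F = G/H` produced by Safonov's
procedure.  Explicitly, `f_{(0,b)} = 0`, `f_{(1,0)} = 1`, and
`f_{(a,b)} = -C_{a+b-2}·binom(a+b-1, b)/(2·4^{a+b-2})` for `a ≥ 1` with `a + b ≥ 2`. -/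
theorem basic_bivariate_diagonal
    (G H : MvPolynomial (Fin 3) ℂ)
    (hG : G = X 2 * X 0 * (3 * X 2 + 2 + X 0 + X 1 * X 0 + 2 * (X 2) ^ 2))
    (hH : H = X 2 + 2 + X 0 + X 1 * X 0)
    (F : MvPowerSeries (Fin 3) ℂ)
    (hF : F = (G : MvPowerSeries (Fin 3) ℂ) * (H : MvPowerSeries (Fin 3) ℂ)⁻¹) :
    ∀ a b : ℕ,
      MvPowerSeries.coeff (Finsupp.equivFunOnFinite.symm ![a + b, b, a + b]) F =
        if a = 0 then 0
        else if a = 1 ∧ b = 0 then 1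
        else -(catalan (a + b - 2) : ℂ) * (Nat.choose (a + b - 1) b : ℂ) /
          (2 * 4 ^ (a + b - 2)) := by
  classical
  have hC : MvPowerSeries.constantCoeff (H : MvPowerSeries (Fin 3) ℂ) ≠ 0 := by
    have h0 : MvPowerSeries.constantCoeff (H : MvPowerSeries (Fin 3) ℂ)
        = MvPolynomial.constantCoeff H := rfl
    rw [h0, hH]
    simp [map_ofNat]
  have h2c : ((2 : MvPolynomial (Fin 3) ℂ) : MvPowerSeries (Fin 3) ℂ)
      = MvPowerSeries.monomial 0 2 := by
    rw [show (2 : MvPolynomial (Fin 3) ℂ) = MvPolynomial.C 2 from (map_ofNat MvPolynomial.C 2).symm,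
      MvPolynomial.coe_C, ← MvPowerSeries.monomial_zero_eq_C_apply]
  have h3c : ((3 : MvPolynomial (Fin 3) ℂ) : MvPowerSeries (Fin 3) ℂ)
      = MvPowerSeries.monomial 0 3 := by
    rw [show (3 : MvPolynomial (Fin 3) ℂ) = MvPolynomial.C 3 from (map_ofNat MvPolynomial.C 3).symm,
      MvPolynomial.coe_C, ← MvPowerSeries.monomial_zero_eq_C_apply]
  have hmul : Phi * (H : MvPowerSeries (Fin 3) ℂ) = (G : MvPowerSeries (Fin 3) ℂ) := by
    ext μ
    rw [hH, hG]
    push_cast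
    rw [h2c, h3c]
    simp only [← MvPowerSeries.monomial_zero_eq_C_apply, MvPowerSeries.X_def, pow_two,
      MvPowerSeries.monomial_mul_monomial, one_mul, mul_one, mul_add, add_mul, map_add]
    simp only [MvPowerSeries.coeff_mul_monomial, MvPowerSeries.coeff_monomial]
    simp (config := { decide := true }) only [coeff_Phi, Finsupp.single_le_iff, finsupp_le_iff,
      zero_le, if_true, tsub_zero, Finsupp.tsub_apply, Finsupp.single_apply, Finsupp.add_apply,
      finsupp_eq_iff, Finsupp.coe_zero, Pi.zero_apply]
    norm_num
    linear_combination key (μ 0) (μ 1) (μ 2)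
  have hFPhi : F = Phi := by
    rw [hF, ← hmul, mul_assoc, MvPowerSeries.mul_inv_cancel _ hC, mul_one]
  intro a b
  rw [hFPhi]
  have ecoeff : MvPowerSeries.coeff (Finsupp.equivFunOnFinite.symm ![a + b, b, a + b]) Phi
      = phi (a+b) b (a+b) := rfl
  rw [ecoeff]
  rcases a with _|a
  · rw [if_pos rfl]
    simp only [Nat.zero_add]
    rcases b with _|_|_|b
    · exact phi_k0 0 0
    · rw [phi_k1]; norm_num
    · have h : phi 2 2 2 = gg 1 2 0 := phi_k2 1 2
      rw [h, gg_eq_zero 0 (by omega)]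
    · have h : phi (b+3) (b+3) (b+3) = gg (b+2) (b+3) (b+1) + gg (b+2) (b+3) b :=
        phi_k3 (b+2) (b+3) b
      rw [h, gg_eq_zero _ (by omega), gg_eq_zero _ (by omega), add_zero]
  · rcases a with _|a
    · rcases b with _|b
      · have h : phi (1+0) 0 (1+0) = if (1:ℕ) = 1 ∧ (0:ℕ) = 0 then 1 else 0 := phi_k1 1 0
        rw [h]
        norm_num
      · rw [if_neg (by omega), if_neg (by omega),
          show 1+(b+1)-2 = b from by omega, show 1+(b+1)-1 = b+1 from by omega,
          show 1+(b+1) = b+2 from by omega]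
        exact phi_n b (b+1)
    · rw [if_neg (by omega), if_neg (by omega),
        show a+1+1+b = a+b+2 from by omega,
        show a+b+2-2 = a+b from by omega, show a+b+2-1 = a+b+1 from by omega]
      exact phi_n (a+b) b
end

section
/- Let H(x₁,x₂,x₃) = x₃ + 2 + x₁ + x₂x₁ and let β₁, β₂ be positive integers. The unique critical point of H for the direction α = (β₁+β₂, β₂, β₁+β₂) is (−β₁/(β₁+β₂), β₂/β₁, −1): this point satisfies H(x) = 0 and α_j·x_i·∂_iH(x) = α_i·x_j·∂_jH(x) for all 1 ≤ i,j ≤ 3, and it is the only point of ℂ³ satisfying these equations. -/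
open MvPolynomial

/-- `(-β₁/(β₁+β₂), β₂/β₁, -1)` is the unique critical point of
`H(x₁,x₂,x₃) = x₃ + 2 + x₁ + x₂x₁` for the direction `α = (β₁+β₂, β₂, β₁+β₂)`. -/
theorem basic_bivariate_critical_point
    (H : MvPolynomial (Fin 3) ℂ)
    (hH : H = X 2 + 2 + X 0 + X 1 * X 0)
    (b1 b2 : ℕ) (hb1 : 0 < b1) (hb2 : 0 < b2)
    (α : Fin 3 → ℕ) (hα : α = ![b1 + b2, b2, b1 + b2]) :
    ∀ x : Fin 3 → ℂ,
      (eval x H = 0 ∧ ∀ i j : Fin 3,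
        (α j : ℂ) * x i * eval x (pderiv i H) = (α i : ℂ) * x j * eval x (pderiv j H)) ↔
      x = ![-(b1 : ℂ) / ((b1 : ℂ) + (b2 : ℂ)), (b2 : ℂ) / (b1 : ℂ), -1] := by
  have hb1' : (b1 : ℂ) ≠ 0 := Nat.cast_ne_zero.2 hb1.ne'
  have hb2' : (b2 : ℂ) ≠ 0 := Nat.cast_ne_zero.2 hb2.ne'
  have hs : (b1 : ℂ) + (b2 : ℂ) ≠ 0 := by
    have : ((b1 + b2 : ℕ) : ℂ) ≠ 0 := Nat.cast_ne_zero.2 (by omega)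
    push_cast at this; exact this
  subst hH hα
  intro x
  constructor
  · rintro ⟨h0, h⟩
    have e02 := h 0 2
    have e12 := h 1 2
    simp [show (2:MvPolynomial (Fin 3) ℂ) = C 2 from (map_ofNat C 2).symm,
      pderiv_X, Pi.single_apply] at h0 e02 e12
    push_cast at e02 e12
    set s : ℂ := (b1 : ℂ) + (b2 : ℂ) with hsdef
    have hc : x 2 = -1 := by
      have h2 : s * (2 * (x 2 + 1)) = 0 := by linear_combination s * h0 - e02
      rcases mul_eq_zero.mp h2 with h' | h'
      · exact absurd h' hs
      · linear_combination h' / 2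
    rw [hc] at e02 e12
    have ha' : s * x 0 = -(b1 : ℂ) := by linear_combination e02 - e12
    have ha : x 0 = -(b1 : ℂ) / s := by field_simp; linear_combination ha'
    have hb : x 1 = (b2 : ℂ) / (b1 : ℂ) := by
      rw [ha] at e12
      field_simp at e12
      have h3 : s * (x 1 * (b1:ℂ) - (b2:ℂ)) = 0 := by linear_combination (-s) * e12
      rcases mul_eq_zero.mp h3 with h' | h'
      · exact absurd h' hs
      · field_simp
        linear_combination h'
    funext i
    fin_cases i <;> simp [ha, hb, hc]
  · rintro rfl
    constructor
    · simp only [show (2:MvPolynomial (Fin 3) ℂ) = C 2 from (map_ofNat C 2).symm,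
        eval_add, eval_mul, eval_X, eval_C, Matrix.cons_val_zero, Matrix.cons_val_one,
        Matrix.head_cons, Matrix.cons_val_two, Matrix.tail_cons]
      field_simp
      ring
    · intro i j
      fin_cases i <;> fin_cases j <;>
        simp [show (2:MvPolynomial (Fin 3) ℂ) = C 2 from (map_ofNat C 2).symm,
          pderiv_X, Pi.single_apply] <;>
        push_cast <;> field_simp <;> ring
end

section
/- Let H(x₁,x₂,x₃) = −x₃ + x₃²x₁ + x₃²x₁x₂ − 2 + 2x₃x₁ + 2x₃x₁x₂ + x₁ + x₁x₂ and let β₁, β₂ be positive integers. There are no critical points of H for the direction α = (β₁+β₂, β₂, β₁+β₂): no point x ∈ ℂ³ satisfies both H(x) = 0 and α_j·x_i·∂_iH(x) = α_i·x_j·∂_jH(x) for all 1 ≤ i,j ≤ 3. -/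
open MvPolynomial

/-- `H(x₁,x₂,x₃) = -x₃ + x₃²x₁ + x₃²x₁x₂ - 2 + 2x₃x₁ + 2x₃x₁x₂ + x₁ + x₁x₂` has no
critical points for the direction `α = (β₁+β₂, β₂, β₁+β₂)`. -/
theorem another_basic_bivariate_no_critical_points
    (H : MvPolynomial (Fin 3) ℂ)
    (hH : H = -X 2 + (X 2) ^ 2 * X 0 + (X 2) ^ 2 * X 0 * X 1 - 2 + 2 * X 2 * X 0
      + 2 * X 2 * X 0 * X 1 + X 0 + X 0 * X 1)
    (b1 b2 : ℕ) (hb1 : 0 < b1) (hb2 : 0 < b2)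
    (α : Fin 3 → ℕ) (hα : α = ![b1 + b2, b2, b1 + b2]) :
    ¬ ∃ x : Fin 3 → ℂ,
      eval x H = 0 ∧ ∀ i j : Fin 3,
        (α j : ℂ) * x i * eval x (pderiv i H) = (α i : ℂ) * x j * eval x (pderiv j H) := by
  rintro ⟨x, h0, hc⟩
  have hc02 := hc 0 2
  have hp2 : ∀ i : Fin 3, pderiv i (2 : MvPolynomial (Fin 3) ℂ) = 0 := fun i => by
    rw [← map_ofNat (C : ℂ →+* MvPolynomial (Fin 3) ℂ) 2, pderiv_C]
  have d0 : pderiv (0 : Fin 3) H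
      = X 2 ^ 2 + X 2 ^ 2 * X 1 + 2 * X 2 + 2 * X 2 * X 1 + 1 + X 1 := by
    simp [hH, pderiv_mul, pderiv_X_self, hp2,
      pderiv_X_of_ne (show (2:Fin 3) ≠ 0 by decide),
      pderiv_X_of_ne (show (1:Fin 3) ≠ 0 by decide)]
    ring
  have d2 : pderiv (2 : Fin 3) H
      = -1 + 2 * X 2 * X 0 + 2 * X 2 * X 0 * X 1 + 2 * X 0 + 2 * X 0 * X 1 := by
    simp [hH, pderiv_mul, pderiv_X_self, hp2,
      pderiv_X_of_ne (show (0:Fin 3) ≠ 2 by decide),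
      pderiv_X_of_ne (show (1:Fin 3) ≠ 2 by decide)]
    ring
  rw [d0, d2, hα] at hc02
  rw [hH] at h0
  simp only [map_add, map_sub, map_neg, map_mul, map_pow, map_one, map_ofNat, eval_X,
    Matrix.cons_val_zero, Matrix.cons_val_two, Matrix.tail_cons, Matrix.head_cons,
    Nat.cast_add] at h0 hc02
  have hcne : ((b1 : ℂ) + b2) ≠ 0 := by
    have h' : ((b1 + b2 : ℕ) : ℂ) ≠ 0 := Nat.cast_ne_zero.mpr (by omega)
    push_cast at h'
    exact h'
  have key : x 0 * (x 2 ^ 2 + x 2 ^ 2 * x 1 + 2 * x 2 + 2 * x 2 * x 1 + 1 + x 1)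
      = x 2 * (-1 + 2 * x 2 * x 0 + 2 * x 2 * x 0 * x 1 + 2 * x 0 + 2 * x 0 * x 1) :=
    mul_left_cancel₀ hcne (by linear_combination hc02)
  exact two_ne_zero (α := ℂ) (by linear_combination (x 2 + 1) * key + (x 2 - 1) * h0)
end
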